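/- arXiv:1901.01571 — 2 statements merged into one kernel-verified Lean document; each statement's English description precedes it below -/
import Mathlib

section
/- Let ψ : 𝕋 × ℝ → ℝ be smooth and rapidly decaying in y, with ω = Δψ. Then ⟨∂_{xy}ψ, y ∂ₓω⟩ = -½‖∂_{xy}ψ‖²_{L²} + ½‖∂_{xx}ψ‖²_{L²}. -/
open MeasureTheory Real

/-- Partial derivative in the first (x) variable. -/
noncomputable def pdx (f : ℝ → ℝ → ℝ) (x y : ℝ) : ℝ := deriv (fun x' => f x' y) x

/-- Partial derivative in the second (y) variable. -/
noncomputable def pdy (f : ℝ → ℝ → ℝ) (x y : ℝ) : ℝ := deriv (fun y' => f x y') y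

/-- Laplacian. -/
noncomputable def lap (f : ℝ → ℝ → ℝ) (x y : ℝ) : ℝ := pdx (pdx f) x y + pdy (pdy f) x y

/-- `f` and all its derivatives decay rapidly in `y`, uniformly in `x`. -/
def RapidDecay (f : ℝ → ℝ → ℝ) : Prop :=
  ∀ k n : ℕ, ∃ C : ℝ, ∀ x y : ℝ,
    |y| ^ n * ‖iteratedFDeriv ℝ k (Function.uncurry f) (x, y)‖ ≤ C

/-- `f` is `2π`-periodic in `x` (i.e. lives on `𝕋 × ℝ`). -/
def PerX (f : ℝ → ℝ → ℝ) : Prop := ∀ y : ℝ, Function.Periodic (fun x => f x y) (2 * π)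

/-- `f` has zero `x`-average. -/
def ZeroAvgX (f : ℝ → ℝ → ℝ) : Prop := ∀ y : ℝ, ∫ x in (0:ℝ)..(2 * π), f x y = 0

section Auxiliary

open Function

variable {f : ℝ → ℝ → ℝ}

private lemma hasDerivAt_sx (hf : ContDiff ℝ (⊤:ℕ∞) (uncurry f)) (x y : ℝ) :
    HasDerivAt (fun x' => f x' y) (fderiv ℝ (uncurry f) (x, y) (1, 0)) x := by
  have h := ((hf.differentiable (by simp) (x, y)).hasFDerivAt).comp_hasDerivAt x
    ((hasDerivAt_id x).prodMk (hasDerivAt_const x y))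
  simpa [Function.comp_def] using h

private lemma hasDerivAt_sy (hf : ContDiff ℝ (⊤:ℕ∞) (uncurry f)) (x y : ℝ) :
    HasDerivAt (fun y' => f x y') (fderiv ℝ (uncurry f) (x, y) (0, 1)) y := by
  have h := ((hf.differentiable (by simp) (x, y)).hasFDerivAt).comp_hasDerivAt y
    ((hasDerivAt_const y x).prodMk (hasDerivAt_id y))
  simpa [Function.comp_def] using h

private lemma pdx_eq (hf : ContDiff ℝ (⊤:ℕ∞) (uncurry f)) (x y : ℝ) :
    pdx f x y = fderiv ℝ (uncurry f) (x, y) (1, 0) := (hasDerivAt_sx hf x y).deriv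

private lemma pdy_eq (hf : ContDiff ℝ (⊤:ℕ∞) (uncurry f)) (x y : ℝ) :
    pdy f x y = fderiv ℝ (uncurry f) (x, y) (0, 1) := (hasDerivAt_sy hf x y).deriv

private lemma hasDerivAt_pdx_slice (hf : ContDiff ℝ (⊤:ℕ∞) (uncurry f)) (x y : ℝ) :
    HasDerivAt (fun x' => f x' y) (pdx f x y) x := (pdx_eq hf x y) ▸ hasDerivAt_sx hf x y

private lemma hasDerivAt_pdy_slice (hf : ContDiff ℝ (⊤:ℕ∞) (uncurry f)) (x y : ℝ) :
    HasDerivAt (fun y' => f x y') (pdy f x y) y := (pdy_eq hf x y) ▸ hasDerivAt_sy hf x y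

private lemma contDiff_pdx (hf : ContDiff ℝ (⊤:ℕ∞) (uncurry f)) :
    ContDiff ℝ (⊤:ℕ∞) (uncurry (pdx f)) := by
  have h1 : ContDiff ℝ (⊤:ℕ∞) (fderiv ℝ (uncurry f)) :=
    hf.fderiv_right (by exact_mod_cast le_top)
  have h2 : uncurry (pdx f) = fun p : ℝ × ℝ => fderiv ℝ (uncurry f) p (1, 0) := by
    funext p; obtain ⟨x, y⟩ := p; exact pdx_eq hf x y
  rw [h2]; exact h1.clm_apply contDiff_const

private lemma contDiff_pdy (hf : ContDiff ℝ (⊤:ℕ∞) (uncurry f)) :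
    ContDiff ℝ (⊤:ℕ∞) (uncurry (pdy f)) := by
  have h1 : ContDiff ℝ (⊤:ℕ∞) (fderiv ℝ (uncurry f)) :=
    hf.fderiv_right (by exact_mod_cast le_top)
  have h2 : uncurry (pdy f) = fun p : ℝ × ℝ => fderiv ℝ (uncurry f) p (0, 1) := by
    funext p; obtain ⟨x, y⟩ := p; exact pdy_eq hf x y
  rw [h2]; exact h1.clm_apply contDiff_const

private lemma hasFDerivAt_clm_e (hf : ContDiff ℝ (⊤:ℕ∞) (uncurry f)) (e : ℝ × ℝ) (p : ℝ × ℝ) :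
    HasFDerivAt (fun q => fderiv ℝ (uncurry f) q e)
      ((fderiv ℝ (fderiv ℝ (uncurry f)) p).flip e) p := by
  have hd : ContDiff ℝ (⊤:ℕ∞) (fderiv ℝ (uncurry f)) :=
    hf.fderiv_right (by exact_mod_cast le_top)
  have h := ((hd.differentiable (by simp) p).hasFDerivAt).clm_apply
    (hasFDerivAt_const e p)
  simpa using h

private lemma pdx_pdy_snd (hf : ContDiff ℝ (⊤:ℕ∞) (uncurry f)) (x y : ℝ) :
    pdx (pdy f) x y = fderiv ℝ (fderiv ℝ (uncurry f)) (x, y) (1, 0) (0, 1) := by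
  have h1 : (fun x' => pdy f x' y) = fun x' => fderiv ℝ (uncurry f) (x', y) (0, 1) :=
    funext fun x' => pdy_eq hf x' y
  show deriv (fun x' => pdy f x' y) x = _
  rw [h1]
  have h2 := (hasFDerivAt_clm_e hf (0,1) (x,y)).comp_hasDerivAt x
    ((hasDerivAt_id x).prodMk (hasDerivAt_const x y))
  simpa [Function.comp_def] using h2.deriv

private lemma pdy_pdx_snd (hf : ContDiff ℝ (⊤:ℕ∞) (uncurry f)) (x y : ℝ) :
    pdy (pdx f) x y = fderiv ℝ (fderiv ℝ (uncurry f)) (x, y) (0, 1) (1, 0) := by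
  have h1 : (fun y' => pdx f x y') = fun y' => fderiv ℝ (uncurry f) (x, y') (1, 0) :=
    funext fun y' => pdx_eq hf x y'
  show deriv (fun y' => pdx f x y') y = _
  rw [h1]
  have h2 := (hasFDerivAt_clm_e hf (1,0) (x,y)).comp_hasDerivAt y
    ((hasDerivAt_const y x).prodMk (hasDerivAt_id y))
  simpa [Function.comp_def] using h2.deriv

private lemma clairaut (hf : ContDiff ℝ (⊤:ℕ∞) (uncurry f)) : pdx (pdy f) = pdy (pdx f) := by
  funext x y
  rw [pdx_pdy_snd hf x y, pdy_pdx_snd hf x y]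
  exact (hf.contDiffAt.isSymmSndFDerivAt (le_trans (by simp) (WithTop.coe_le_coe.2 (le_top : (2:ℕ∞) ≤ ⊤)))) (1,0) (0,1)

private lemma perX_pdx (hp : PerX f) : PerX (pdx f) := by
  intro y x
  show deriv (fun x' => f x' y) (x + 2 * π) = deriv (fun x' => f x' y) x
  have h1 : (fun x' => f x' y) = fun x' => f (x' + 2 * π) y := by
    funext x'; exact (hp y x').symm
  conv_rhs => rw [h1]
  rw [deriv_comp_add_const (f := fun x' => f x' y) (a := 2 * π)]

private lemma perX_pdy (hp : PerX f) : PerX (pdy f) := by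
  intro y x
  show deriv (fun y' => f (x + 2 * π) y') y = deriv (fun y' => f x y') y
  have h1 : (fun y' => f (x + 2 * π) y') = fun y' => f x y' := by
    funext y'; exact hp y' x
  rw [h1]

private lemma decay_aux (hf : ContDiff ℝ (⊤:ℕ∞) (uncurry f)) (hd : RapidDecay f) (e : ℝ × ℝ)
    (g0 : ℝ → ℝ → ℝ)
    (he : uncurry g0 = fun p : ℝ × ℝ => fderiv ℝ (uncurry f) p e) :
    RapidDecay g0 := by
  intro k n
  obtain ⟨C, hC⟩ := hd (k + 1) n
  set g : ((ℝ × ℝ) →L[ℝ] ℝ) →L[ℝ] ℝ := ContinuousLinearMap.apply ℝ ℝ e with hg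
  refine ⟨‖g‖ * C, fun x y => ?_⟩
  have hd1 : ContDiff ℝ (⊤:ℕ∞) (fderiv ℝ (uncurry f)) :=
    hf.fderiv_right (by exact_mod_cast le_top)
  have he2 : uncurry g0 = ⇑g ∘ fderiv ℝ (uncurry f) := he
  have h3 := g.iteratedFDeriv_comp_left (x := (x, y)) hd1.contDiffAt (i := k) (by exact_mod_cast le_top)
  have hnorm : ‖iteratedFDeriv ℝ k (uncurry g0) (x, y)‖
      ≤ ‖g‖ * ‖iteratedFDeriv ℝ (k + 1) (uncurry f) (x, y)‖ := by
    rw [he2, h3, ← norm_iteratedFDeriv_fderiv]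
    exact g.norm_compContinuousMultilinearMap_le _
  calc |y| ^ n * ‖iteratedFDeriv ℝ k (uncurry g0) (x, y)‖
      ≤ |y| ^ n * (‖g‖ * ‖iteratedFDeriv ℝ (k + 1) (uncurry f) (x, y)‖) := by
        gcongr
    _ = ‖g‖ * (|y| ^ n * ‖iteratedFDeriv ℝ (k + 1) (uncurry f) (x, y)‖) := by ring
    _ ≤ ‖g‖ * C := by gcongr; exact hC x y

private lemma decay_pdx (hf : ContDiff ℝ (⊤:ℕ∞) (uncurry f)) (hd : RapidDecay f) :
    RapidDecay (pdx f) := by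
  refine decay_aux hf hd (1, 0) (pdx f) ?_
  funext p; obtain ⟨x, y⟩ := p; exact pdx_eq hf x y

private lemma decay_pdy (hf : ContDiff ℝ (⊤:ℕ∞) (uncurry f)) (hd : RapidDecay f) :
    RapidDecay (pdy f) := by
  refine decay_aux hf hd (0, 1) (pdy f) ?_
  funext p; obtain ⟨x, y⟩ := p; exact pdy_eq hf x y

private lemma contSliceX {g : ℝ → ℝ → ℝ} (h : Continuous (uncurry g)) (y : ℝ) :
    Continuous fun x => g x y := h.comp (continuous_id.prodMk continuous_const)

private lemma decay_bound (hd : RapidDecay f) :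
    ∃ C : ℝ, 0 ≤ C ∧ ∀ x y : ℝ, |f x y| ≤ C * (1 + y ^ 2)⁻¹ := by
  obtain ⟨C0, h0⟩ := hd 0 0
  obtain ⟨C2, h2⟩ := hd 0 2
  have e : ∀ x y : ℝ, ‖iteratedFDeriv ℝ 0 (uncurry f) (x, y)‖ = |f x y| := fun x y => by
    rw [norm_iteratedFDeriv_zero]; rfl
  have h0' : ∀ x y : ℝ, |f x y| ≤ C0 := fun x y => by
    have := h0 x y; rwa [e, pow_zero, one_mul] at this
  have h2' : ∀ x y : ℝ, y ^ 2 * |f x y| ≤ C2 := fun x y => by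
    have := h2 x y; rwa [e, sq_abs] at this
  refine ⟨C0 + C2, ?_, fun x y => ?_⟩
  · have a0 := (abs_nonneg (f 0 0)).trans (h0' 0 0)
    have a2 := h2' 0 1
    nlinarith [abs_nonneg (f 0 1)]
  · have hb : |f x y| * (1 + y ^ 2) ≤ C0 + C2 := by
      have := h0' x y; have := h2' x y
      nlinarith [abs_nonneg (f x y)]
    have hpos : (0:ℝ) < 1 + y ^ 2 := by positivity
    calc |f x y| = |f x y| * (1 + y ^ 2) * (1 + y ^ 2)⁻¹ := by field_simp
      _ ≤ (C0 + C2) * (1 + y ^ 2)⁻¹ :=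
          mul_le_mul_of_nonneg_right hb (le_of_lt (inv_pos.2 hpos))

private lemma hasDerivAt_intx (g : ℝ → ℝ → ℝ) (hg : ContDiff ℝ (⊤:ℕ∞) (uncurry g)) (y : ℝ) :
    HasDerivAt (fun y' => ∫ x in (0:ℝ)..(2 * π), g x y')
      (∫ x in (0:ℝ)..(2 * π), pdy g x y) y := by
  obtain ⟨M, hM⟩ : ∃ M, ∀ p ∈ Set.Icc (0:ℝ) (2 * π) ×ˢ Set.Icc (y - 1) (y + 1),
      ‖uncurry (pdy g) p‖ ≤ M :=
    (isCompact_Icc.prod isCompact_Icc).exists_bound_of_continuousOn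
      ((contDiff_pdy hg).continuous.continuousOn)
  have hsub : ∀ t, t ∈ Set.uIoc (0:ℝ) (2 * π) → t ∈ Set.Icc (0:ℝ) (2 * π) := by
    intro t ht
    rw [Set.uIoc_of_le (by positivity)] at ht
    exact Set.Ioc_subset_Icc_self ht
  have hball : ∀ y' ∈ Metric.ball y 1, y' ∈ Set.Icc (y - 1) (y + 1) := by
    intro y' hy'
    rw [Real.ball_eq_Ioo] at hy'
    exact Set.Ioo_subset_Icc_self hy'
  exact (intervalIntegral.hasDerivAt_integral_of_dominated_loc_of_deriv_le
    (F := fun y' x => g x y') (F' := fun y' x => pdy g x y') (bound := fun _ => M)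
    (Metric.ball_mem_nhds y one_pos)
    (Filter.Eventually.of_forall fun y' =>
      ((contSliceX hg.continuous y').aestronglyMeasurable))
    ((contSliceX hg.continuous y).intervalIntegrable _ _)
    ((contSliceX (contDiff_pdy hg).continuous y).aestronglyMeasurable)
    (Filter.Eventually.of_forall fun t ht y' hy' => hM (t, y') ⟨hsub t ht, hball y' hy'⟩)
    intervalIntegrable_const
    (Filter.Eventually.of_forall fun t _ y' _ => hasDerivAt_pdy_slice hg t y')).2

private lemma cont_intx (g : ℝ → ℝ → ℝ) (hg : ContDiff ℝ (⊤:ℕ∞) (uncurry g)) :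
    Continuous fun y => ∫ x in (0:ℝ)..(2 * π), g x y :=
  continuous_iff_continuousAt.2 fun y => (hasDerivAt_intx g hg y).continuousAt

private lemma integrable_of_bound {h : ℝ → ℝ} (hc : Continuous h) (K : ℝ)
    (hb : ∀ y, |h y| ≤ K * (1 + y ^ 2)⁻¹) : Integrable h := by
  refine (integrable_inv_one_add_sq.const_mul K).mono' hc.aestronglyMeasurable
    (Filter.Eventually.of_forall fun y => ?_)
  simpa [Real.norm_eq_abs] using hb y

private lemma tendsto_Kinv_atTop (K : ℝ) :
    Filter.Tendsto (fun y : ℝ => K * (1 + y ^ 2)⁻¹) Filter.atTop (nhds 0) := by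
  have h1 : Filter.Tendsto (fun y : ℝ => 1 + y ^ 2) Filter.atTop Filter.atTop :=
    Filter.tendsto_atTop_add_const_left _ 1 (Filter.tendsto_pow_atTop two_ne_zero)
  have := (h1.inv_tendsto_atTop).const_mul K
  simpa using this

private lemma tendsto_Kinv_atBot (K : ℝ) :
    Filter.Tendsto (fun y : ℝ => K * (1 + y ^ 2)⁻¹) Filter.atBot (nhds 0) := by
  have habs : Filter.Tendsto (fun y : ℝ => |y| ^ 2) Filter.atBot Filter.atTop :=
    (Filter.tendsto_pow_atTop two_ne_zero).comp Filter.tendsto_abs_atBot_atTop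
  have h1 : Filter.Tendsto (fun y : ℝ => 1 + y ^ 2) Filter.atBot Filter.atTop := by
    have : (fun y : ℝ => |y| ^ 2) = fun y : ℝ => y ^ 2 := by funext y; exact sq_abs y
    rw [this] at habs
    exact Filter.tendsto_atTop_add_const_left _ 1 habs
  have := (h1.inv_tendsto_atTop).const_mul K
  simpa using this

private lemma integral_pdx_zero (g : ℝ → ℝ → ℝ) (hg : ContDiff ℝ (⊤:ℕ∞) (uncurry g))
    (hp : PerX g) (y : ℝ) : (∫ x in (0:ℝ)..(2 * π), pdx g x y) = 0 := by
  rw [intervalIntegral.integral_eq_sub_of_hasDerivAt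
    (fun x _ => hasDerivAt_pdx_slice hg x y)
    ((contSliceX (contDiff_pdx hg).continuous y).intervalIntegrable _ _)]
  have := hp y 0
  simp only [zero_add] at this
  simp [this]

end Auxiliary

/-- `⟨∂ₓyψ, y ∂ₓω⟩ = -½‖∂ₓyψ‖² + ½‖∂ₓₓψ‖²` where `ω = Δψ`. -/
theorem stmt5 (ψ : ℝ → ℝ → ℝ)
    (hsmooth : ContDiff ℝ (⊤ : ℕ∞) (Function.uncurry ψ))
    (hper : PerX ψ) (hdecay : RapidDecay ψ) :
    (∫ y : ℝ, ∫ x in (0:ℝ)..(2 * π),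
        pdy (pdx ψ) x y * (y * pdx (lap ψ) x y)) =
      -(1/2) * (∫ y : ℝ, ∫ x in (0:ℝ)..(2 * π), (pdy (pdx ψ) x y) ^ 2)
        + (1/2) * (∫ y : ℝ, ∫ x in (0:ℝ)..(2 * π), (pdx (pdx ψ) x y) ^ 2) := by
  have hψ : ContDiff ℝ (⊤:ℕ∞) (Function.uncurry ψ) := hsmooth.of_le (by simp)
  set a := pdx (pdx ψ) with ha_def
  set b := pdy (pdx ψ) with hb_def
  have hu : ContDiff ℝ (⊤:ℕ∞) (Function.uncurry (pdx ψ)) := contDiff_pdx hψ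
  have ha : ContDiff ℝ (⊤:ℕ∞) (Function.uncurry a) := contDiff_pdx hu
  have hb : ContDiff ℝ (⊤:ℕ∞) (Function.uncurry b) := contDiff_pdy hu
  have hya : ContDiff ℝ (⊤:ℕ∞) (Function.uncurry (pdy a)) := contDiff_pdy ha
  have hyb : ContDiff ℝ (⊤:ℕ∞) (Function.uncurry (pdy b)) := contDiff_pdy hb
  have hyψ : ContDiff ℝ (⊤:ℕ∞) (Function.uncurry (pdy ψ)) := contDiff_pdy hψ
  have hyyψ : ContDiff ℝ (⊤:ℕ∞) (Function.uncurry (pdy (pdy ψ))) := contDiff_pdy hyψ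
  have hxa : ContDiff ℝ (⊤:ℕ∞) (Function.uncurry (pdx a)) := contDiff_pdx ha
  have hxb : ContDiff ℝ (⊤:ℕ∞) (Function.uncurry (pdx b)) := contDiff_pdx hb
  -- periodicity
  have hpu : PerX (pdx ψ) := perX_pdx hper
  have hpa : PerX a := perX_pdx hpu
  have hpb : PerX b := perX_pdy hpu
  -- decay and bounds
  have hdu : RapidDecay (pdx ψ) := decay_pdx hψ hdecay
  have hda : RapidDecay a := decay_pdx hu hdu
  have hdb : RapidDecay b := decay_pdy hu hdu
  obtain ⟨Ca, hCa0, hCa⟩ := decay_bound hda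
  obtain ⟨Cb, hCb0, hCb⟩ := decay_bound hdb
  obtain ⟨Cya, hCya0, hCya⟩ := decay_bound (decay_pdy ha hda)
  obtain ⟨Cyb, hCyb0, hCyb⟩ := decay_bound (decay_pdy hb hdb)
  -- smoothness of squares and products
  have sqa_smooth : ContDiff ℝ (⊤:ℕ∞) (Function.uncurry fun x y => a x y ^ 2) := ha.pow 2
  have sqb_smooth : ContDiff ℝ (⊤:ℕ∞) (Function.uncurry fun x y => b x y ^ 2) := hb.pow 2
  have g2a_smooth : ContDiff ℝ (⊤:ℕ∞) (Function.uncurry fun x y => 2 * a x y * pdy a x y) :=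
    (contDiff_const.mul ha).mul hya
  have g2b_smooth : ContDiff ℝ (⊤:ℕ∞) (Function.uncurry fun x y => 2 * b x y * pdy b x y) :=
    (contDiff_const.mul hb).mul hyb
  -- derivative of squares in y
  have pdy_sqa : ∀ x y : ℝ, pdy (fun x y => a x y ^ 2) x y = 2 * a x y * pdy a x y := by
    intro x y
    have h := ((hasDerivAt_pdy_slice ha x y).fun_pow 2).deriv
    show deriv (fun y' => a x y' ^ 2) y = _
    rw [h]; ring
  have pdy_sqb : ∀ x y : ℝ, pdy (fun x y => b x y ^ 2) x y = 2 * b x y * pdy b x y := by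
    intro x y
    have h := ((hasDerivAt_pdy_slice hb x y).fun_pow 2).deriv
    show deriv (fun y' => b x y' ^ 2) y = _
    rw [h]; ring
  -- the key functions of y
  set F : ℝ → ℝ := fun y => ∫ x in (0:ℝ)..(2 * π), a x y ^ 2 with hF_def
  set G : ℝ → ℝ := fun y => ∫ x in (0:ℝ)..(2 * π), b x y ^ 2 with hG_def
  set DF : ℝ → ℝ := fun y => ∫ x in (0:ℝ)..(2 * π), 2 * a x y * pdy a x y with hDF_def
  set DG : ℝ → ℝ := fun y => ∫ x in (0:ℝ)..(2 * π), 2 * b x y * pdy b x y with hDG_def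
  have hFd : ∀ y : ℝ, HasDerivAt F (DF y) y := by
    intro y
    have h := hasDerivAt_intx (fun x y => a x y ^ 2) sqa_smooth y
    have h2 : (∫ x in (0:ℝ)..(2 * π), pdy (fun x y => a x y ^ 2) x y) = DF y := by
      rw [hDF_def]
      exact intervalIntegral.integral_congr fun x _ => pdy_sqa x y
    rw [hF_def, ← h2]
    exact h
  have hGd : ∀ y : ℝ, HasDerivAt G (DG y) y := by
    intro y
    have h := hasDerivAt_intx (fun x y => b x y ^ 2) sqb_smooth y
    have h2 : (∫ x in (0:ℝ)..(2 * π), pdy (fun x y => b x y ^ 2) x y) = DG y := by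
      rw [hDG_def]
      exact intervalIntegral.integral_congr fun x _ => pdy_sqb x y
    rw [hG_def, ← h2]
    exact h
  -- continuity
  have hFc : Continuous F := by rw [hF_def]; exact cont_intx _ sqa_smooth
  have hGc : Continuous G := by rw [hG_def]; exact cont_intx _ sqb_smooth
  have hDFc : Continuous DF := by rw [hDF_def]; exact cont_intx _ g2a_smooth
  have hDGc : Continuous DG := by rw [hDG_def]; exact cont_intx _ g2b_smooth
  -- pointwise bounds of the integrals
  have hFb : ∀ y : ℝ, |F y| ≤ (Ca ^ 2 * ((1 + y ^ 2)⁻¹ * (1 + y ^ 2)⁻¹)) * |2 * π - 0| := by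
    intro y
    simp only [hF_def]
    rw [← Real.norm_eq_abs]
    apply intervalIntegral.norm_integral_le_of_norm_le_const
    intro x _
    rw [Real.norm_eq_abs]
    calc |a x y ^ 2| = |a x y| * |a x y| := by rw [pow_two, abs_mul]
      _ ≤ (Ca * (1 + y ^ 2)⁻¹) * (Ca * (1 + y ^ 2)⁻¹) :=
          mul_le_mul (hCa x y) (hCa x y) (abs_nonneg _) (by positivity)
      _ = Ca ^ 2 * ((1 + y ^ 2)⁻¹ * (1 + y ^ 2)⁻¹) := by ring
  have hGb : ∀ y : ℝ, |G y| ≤ (Cb ^ 2 * ((1 + y ^ 2)⁻¹ * (1 + y ^ 2)⁻¹)) * |2 * π - 0| := by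
    intro y
    simp only [hG_def]
    rw [← Real.norm_eq_abs]
    apply intervalIntegral.norm_integral_le_of_norm_le_const
    intro x _
    rw [Real.norm_eq_abs]
    calc |b x y ^ 2| = |b x y| * |b x y| := by rw [pow_two, abs_mul]
      _ ≤ (Cb * (1 + y ^ 2)⁻¹) * (Cb * (1 + y ^ 2)⁻¹) :=
          mul_le_mul (hCb x y) (hCb x y) (abs_nonneg _) (by positivity)
      _ = Cb ^ 2 * ((1 + y ^ 2)⁻¹ * (1 + y ^ 2)⁻¹) := by ring
  have hDFb : ∀ y : ℝ, |DF y| ≤ ((2 * Ca * Cya) * ((1 + y ^ 2)⁻¹ * (1 + y ^ 2)⁻¹)) * |2 * π - 0| := by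
    intro y
    simp only [hDF_def]
    rw [← Real.norm_eq_abs]
    apply intervalIntegral.norm_integral_le_of_norm_le_const
    intro x _
    rw [Real.norm_eq_abs]
    calc |2 * a x y * pdy a x y| = 2 * (|a x y| * |pdy a x y|) := by
          rw [abs_mul, abs_mul]; norm_num; ring
      _ ≤ 2 * ((Ca * (1 + y ^ 2)⁻¹) * (Cya * (1 + y ^ 2)⁻¹)) := by
          have := mul_le_mul (hCa x y) (hCya x y) (abs_nonneg _) (by positivity)
          linarith
      _ = (2 * Ca * Cya) * ((1 + y ^ 2)⁻¹ * (1 + y ^ 2)⁻¹) := by ring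
  have hDGb : ∀ y : ℝ, |DG y| ≤ ((2 * Cb * Cyb) * ((1 + y ^ 2)⁻¹ * (1 + y ^ 2)⁻¹)) * |2 * π - 0| := by
    intro y
    simp only [hDG_def]
    rw [← Real.norm_eq_abs]
    apply intervalIntegral.norm_integral_le_of_norm_le_const
    intro x _
    rw [Real.norm_eq_abs]
    calc |2 * b x y * pdy b x y| = 2 * (|b x y| * |pdy b x y|) := by
          rw [abs_mul, abs_mul]; norm_num; ring
      _ ≤ 2 * ((Cb * (1 + y ^ 2)⁻¹) * (Cyb * (1 + y ^ 2)⁻¹)) := by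
          have := mul_le_mul (hCb x y) (hCyb x y) (abs_nonneg _) (by positivity)
          linarith
      _ = (2 * Cb * Cyb) * ((1 + y ^ 2)⁻¹ * (1 + y ^ 2)⁻¹) := by ring
  -- a combination bound
  have combine : ∀ (K1 K2 v1 v2 y : ℝ), 0 ≤ K1 → 0 ≤ K2 →
      |v1| ≤ (K1 * ((1 + y ^ 2)⁻¹ * (1 + y ^ 2)⁻¹)) * |2 * π - 0| →
      |v2| ≤ (K2 * ((1 + y ^ 2)⁻¹ * (1 + y ^ 2)⁻¹)) * |2 * π - 0| →
      |y * (-(1/2) * v1 + (1/2) * v2)| ≤ ((1/2) * (K1 + K2) * |2 * π - 0|) * (1 + y ^ 2)⁻¹ := by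
    intro K1 K2 v1 v2 y hK1 hK2 hb1 hb2
    have hy1 : |y| * (1 + y ^ 2)⁻¹ ≤ 1 := by
      have h1 : |y| ≤ 1 + y ^ 2 := by nlinarith [abs_nonneg y, sq_abs y]
      calc |y| * (1 + y ^ 2)⁻¹ ≤ (1 + y ^ 2) * (1 + y ^ 2)⁻¹ := by gcongr
        _ = 1 := by field_simp
    have habs : |(-(1/2) * v1 + (1/2) * v2)| ≤ (1/2) * |v1| + (1/2) * |v2| := by
      calc |(-(1/2) * v1 + (1/2) * v2)| ≤ |(-(1/2)) * v1| + |(1/2) * v2| := abs_add_le _ _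
        _ = (1/2) * |v1| + (1/2) * |v2| := by
              rw [abs_mul, abs_mul, abs_neg, abs_of_nonneg (by norm_num : (0:ℝ) ≤ 1/2)]
    have h0 : (0:ℝ) ≤ (1/2) * (K1 + K2) * |2 * π - 0| * (1 + y ^ 2)⁻¹ := by
      have hs : (0:ℝ) ≤ K1 + K2 := add_nonneg hK1 hK2
      have hi : (0:ℝ) ≤ (1 + y ^ 2)⁻¹ := by positivity
      have := mul_nonneg (mul_nonneg (mul_nonneg (by norm_num : (0:ℝ) ≤ 1/2) hs)
        (abs_nonneg (2 * π - 0))) hi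
      exact this
    calc |y * (-(1/2) * v1 + (1/2) * v2)| = |y| * |(-(1/2) * v1 + (1/2) * v2)| := abs_mul _ _
      _ ≤ |y| * ((1/2) * |v1| + (1/2) * |v2|) :=
          mul_le_mul_of_nonneg_left habs (abs_nonneg y)
      _ ≤ |y| * ((1/2) * ((K1 * ((1 + y ^ 2)⁻¹ * (1 + y ^ 2)⁻¹)) * |2 * π - 0|)
            + (1/2) * ((K2 * ((1 + y ^ 2)⁻¹ * (1 + y ^ 2)⁻¹)) * |2 * π - 0|)) := by
          gcongr
      _ = (|y| * (1 + y ^ 2)⁻¹) * ((1/2) * (K1 + K2) * |2 * π - 0| * (1 + y ^ 2)⁻¹) := by ring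
      _ ≤ 1 * ((1/2) * (K1 + K2) * |2 * π - 0| * (1 + y ^ 2)⁻¹) :=
          mul_le_mul_of_nonneg_right hy1 h0
      _ = ((1/2) * (K1 + K2) * |2 * π - 0|) * (1 + y ^ 2)⁻¹ := by ring
  -- integrability
  have hinvle : ∀ y : ℝ, (1 + y ^ 2)⁻¹ ≤ 1 := fun y => by
    rw [inv_le_one_iff₀]; right; nlinarith [sq_nonneg y]
  have hFint : Integrable F := by
    apply integrable_of_bound hFc (Ca ^ 2 * |2 * π - 0|)
    intro y
    have hi : (0:ℝ) ≤ (1 + y ^ 2)⁻¹ := by positivity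
    calc |F y| ≤ (Ca ^ 2 * ((1 + y ^ 2)⁻¹ * (1 + y ^ 2)⁻¹)) * |2 * π - 0| := hFb y
      _ ≤ (Ca ^ 2 * (1 * (1 + y ^ 2)⁻¹)) * |2 * π - 0| := by gcongr; exact hinvle y
      _ = Ca ^ 2 * |2 * π - 0| * (1 + y ^ 2)⁻¹ := by ring
  have hGint : Integrable G := by
    apply integrable_of_bound hGc (Cb ^ 2 * |2 * π - 0|)
    intro y
    have hi : (0:ℝ) ≤ (1 + y ^ 2)⁻¹ := by positivity
    calc |G y| ≤ (Cb ^ 2 * ((1 + y ^ 2)⁻¹ * (1 + y ^ 2)⁻¹)) * |2 * π - 0| := hGb y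
      _ ≤ (Cb ^ 2 * (1 * (1 + y ^ 2)⁻¹)) * |2 * π - 0| := by gcongr; exact hinvle y
      _ = Cb ^ 2 * |2 * π - 0| * (1 + y ^ 2)⁻¹ := by ring
  have hHint : Integrable (fun y => -(1/2) * F y + (1/2) * G y) :=
    (hFint.const_mul _).add (hGint.const_mul _)
  have hyDHb : ∀ y : ℝ, |y * (-(1/2) * DF y + (1/2) * DG y)|
      ≤ ((1/2) * ((2 * Ca * Cya) + (2 * Cb * Cyb)) * |2 * π - 0|) * (1 + y ^ 2)⁻¹ :=
    fun y => combine _ _ _ _ y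
      (by positivity)
      (by positivity)
      (hDFb y) (hDGb y)
  have hyDHc : Continuous (fun y => y * (-(1/2) * DF y + (1/2) * DG y)) :=
    continuous_id.mul ((continuous_const.mul hDFc).add (continuous_const.mul hDGc))
  have hyDHint : Integrable (fun y => y * (-(1/2) * DF y + (1/2) * DG y)) :=
    integrable_of_bound hyDHc _ hyDHb
  -- the boundary function and its derivative
  have hPhid : ∀ y : ℝ, HasDerivAt (fun y' => y' * (-(1/2) * F y' + (1/2) * G y'))
      ((-(1/2) * F y + (1/2) * G y) + y * (-(1/2) * DF y + (1/2) * DG y)) y := by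
    intro y
    have h1 : HasDerivAt (fun y' => -(1/2) * F y' + (1/2) * G y')
        (-(1/2) * DF y + (1/2) * DG y) y := ((hFd y).const_mul _).add ((hGd y).const_mul _)
    have h2 := (hasDerivAt_id y).fun_mul h1
    simp only [id_eq] at h2
    exact h2.congr_deriv (by ring)
  -- tendsto 0 at both infinities
  have hPhib : ∀ y : ℝ, ‖y * (-(1/2) * F y + (1/2) * G y)‖
      ≤ ((1/2) * (Ca ^ 2 + Cb ^ 2) * |2 * π - 0|) * (1 + y ^ 2)⁻¹ := fun y => by
    rw [Real.norm_eq_abs]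
    exact combine _ _ _ _ y (by positivity) (by positivity) (hFb y) (hGb y)
  have htop : Filter.Tendsto (fun y' => y' * (-(1/2) * F y' + (1/2) * G y'))
      Filter.atTop (nhds 0) :=
    squeeze_zero_norm hPhib (tendsto_Kinv_atTop _)
  have hbot : Filter.Tendsto (fun y' => y' * (-(1/2) * F y' + (1/2) * G y'))
      Filter.atBot (nhds 0) :=
    squeeze_zero_norm hPhib (tendsto_Kinv_atBot _)
  -- FTC on the real line
  have hkey : (∫ y : ℝ, ((-(1/2) * F y + (1/2) * G y)
      + y * (-(1/2) * DF y + (1/2) * DG y))) = 0 - 0 :=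
    MeasureTheory.integral_of_hasDerivAt_of_tendsto hPhid (hHint.add hyDHint) hbot htop
  -- laplacian derivative decomposition
  have hlapD : ∀ x y : ℝ, pdx (lap ψ) x y = pdx a x y + pdy b x y := by
    intro x y
    have h2 := ((hasDerivAt_pdx_slice ha x y).fun_add (hasDerivAt_pdx_slice hyyψ x y)).deriv
    have h3 : pdx (pdy (pdy ψ)) = pdy (pdx (pdy ψ)) := clairaut hyψ
    have h4 : pdy (pdx (pdy ψ)) = pdy (pdy (pdx ψ)) := congrArg pdy (clairaut hψ)
    have h5 : (fun x' => lap ψ x' y) = fun x' => a x' y + pdy (pdy ψ) x' y := by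
      funext x'; rw [ha_def]; rfl
    show deriv (fun x' => lap ψ x' y) x = _
    rw [h5, h2, hb_def, h3, h4]
  -- the inner (x) integral identity
  have key : ∀ y : ℝ, (∫ x in (0:ℝ)..(2 * π), b x y * (y * pdx (lap ψ) x y))
      = y * (-(1/2) * DF y + (1/2) * DG y) := by
    intro y
    have hc1 : Continuous fun x => y * (b x y * pdx a x y) :=
      continuous_const.mul ((contSliceX hb.continuous y).mul (contSliceX hxa.continuous y))
    have hc2 : Continuous fun x => y * (b x y * pdy b x y) :=
      continuous_const.mul ((contSliceX hb.continuous y).mul (contSliceX hyb.continuous y))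
    have hcongr : Set.EqOn (fun x => b x y * (y * pdx (lap ψ) x y))
        (fun x => y * (b x y * pdx a x y) + y * (b x y * pdy b x y))
        (Set.uIcc (0:ℝ) (2 * π)) := fun x _ => by
      simp only [hlapD x y]; ring
    rw [intervalIntegral.integral_congr hcongr,
      intervalIntegral.integral_add (hc1.intervalIntegrable _ _) (hc2.intervalIntegrable _ _),
      intervalIntegral.integral_const_mul, intervalIntegral.integral_const_mul]
    have e2 : (∫ x in (0:ℝ)..(2 * π), b x y * pdy b x y) = (1/2) * DG y := by
      have h : DG y = ∫ x in (0:ℝ)..(2 * π), 2 * (b x y * pdy b x y) := by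
        rw [hDG_def]
        exact intervalIntegral.integral_congr fun x _ => by ring
      rw [h, intervalIntegral.integral_const_mul]; ring
    have e1 : (∫ x in (0:ℝ)..(2 * π), b x y * pdx a x y) = -((1/2) * DF y) := by
      have hP : ∀ x ∈ Set.uIcc (0:ℝ) (2 * π), HasDerivAt (fun x' => b x' y * a x' y)
          (pdx b x y * a x y + b x y * pdx a x y) x :=
        fun x _ => (hasDerivAt_pdx_slice hb x y).mul (hasDerivAt_pdx_slice ha x y)
      have hc3 : Continuous fun x => pdx b x y * a x y :=
        (contSliceX hxb.continuous y).mul (contSliceX ha.continuous y)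
      have hc4 : Continuous fun x => b x y * pdx a x y :=
        (contSliceX hb.continuous y).mul (contSliceX hxa.continuous y)
      have hzero : (∫ x in (0:ℝ)..(2 * π), (pdx b x y * a x y + b x y * pdx a x y)) = 0 := by
        rw [intervalIntegral.integral_eq_sub_of_hasDerivAt hP
          ((hc3.add hc4).intervalIntegrable _ _)]
        have h1 := hpa y 0
        have h2 := hpb y 0
        simp only [zero_add] at h1 h2
        simp [h1, h2]
      rw [intervalIntegral.integral_add (hc3.intervalIntegrable _ _)
        (hc4.intervalIntegrable _ _)] at hzero
      have hcomm : pdx b = pdy a := by rw [hb_def, ha_def]; exact clairaut hu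
      have e3 : (∫ x in (0:ℝ)..(2 * π), pdx b x y * a x y) = (1/2) * DF y := by
        have h : DF y = ∫ x in (0:ℝ)..(2 * π), 2 * (pdx b x y * a x y) := by
          rw [hDF_def]
          refine intervalIntegral.integral_congr fun x _ => ?_
          rw [hcomm]; ring
        rw [h, intervalIntegral.integral_const_mul]; ring
      linarith
    rw [e1, e2]; ring
  -- final assembly
  calc (∫ y : ℝ, ∫ x in (0:ℝ)..(2 * π), b x y * (y * pdx (lap ψ) x y))
      = ∫ y : ℝ, y * (-(1/2) * DF y + (1/2) * DG y) :=
        MeasureTheory.integral_congr_ae (Filter.Eventually.of_forall key)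
    _ = ∫ y : ℝ, (((-(1/2) * F y + (1/2) * G y) + y * (-(1/2) * DF y + (1/2) * DG y))
          - (-(1/2) * F y + (1/2) * G y)) :=
        MeasureTheory.integral_congr_ae (Filter.Eventually.of_forall fun y => by ring)
    _ = (∫ y : ℝ, ((-(1/2) * F y + (1/2) * G y) + y * (-(1/2) * DF y + (1/2) * DG y)))
          - ∫ y : ℝ, (-(1/2) * F y + (1/2) * G y) :=
        MeasureTheory.integral_sub (hHint.add hyDHint) hHint
    _ = -(∫ y : ℝ, (-(1/2) * F y + (1/2) * G y)) := by rw [hkey]; ring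
    _ = -((-(1/2)) * (∫ y : ℝ, F y) + (1/2) * (∫ y : ℝ, G y)) := by
        rw [MeasureTheory.integral_add (hFint.const_mul _) (hGint.const_mul _),
          MeasureTheory.integral_const_mul, MeasureTheory.integral_const_mul]
    _ = -(1/2) * (∫ y : ℝ, G y) + (1/2) * (∫ y : ℝ, F y) := by ring
end

section
/- Let ω : 𝕋 × ℝ → ℝ be smooth with zero x-average and rapid decay, ψ = Δ⁻¹ω. Then ‖∇⊥∂_yΔ⁻²ω‖_{L^∞} + ‖Δ⁻¹ω‖_{L^∞} ≤ C‖ω‖_{L²} for an absolute constant C. -/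
open MeasureTheory Real Set Filter Topology intervalIntegral

structure Nice (f : ℝ → ℝ → ℝ) : Prop where
  smooth : ContDiff ℝ (⊤ : ℕ∞) (Function.uncurry f)
  per : PerX f
  decay : RapidDecay f

namespace Nice

variable {f g : ℝ → ℝ → ℝ}

lemma diffAt (hf : Nice f) (p : ℝ × ℝ) : DifferentiableAt ℝ (Function.uncurry f) p :=
  (hf.smooth.differentiable (by simp)) p

lemma hasDerivAt_x (hf : Nice f) (x y : ℝ) :
    HasDerivAt (fun x' => f x' y) (pdx f x y) x := by
  have h : DifferentiableAt ℝ (fun x' => f x' y) x := by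
    have : (fun x' => f x' y) = (Function.uncurry f) ∘ (fun x' => (x', y)) := rfl
    rw [this]
    exact (hf.diffAt (x, y)).comp x (differentiableAt_id.prodMk (differentiableAt_const y))
  exact h.hasDerivAt

lemma hasDerivAt_y (hf : Nice f) (x y : ℝ) :
    HasDerivAt (fun y' => f x y') (pdy f x y) y := by
  have h : DifferentiableAt ℝ (fun y' => f x y') y := by
    have : (fun y' => f x y') = (Function.uncurry f) ∘ (fun y' => (x, y')) := rfl
    rw [this]
    exact (hf.diffAt (x, y)).comp y ((differentiableAt_const x).prodMk differentiableAt_id)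
  exact h.hasDerivAt

lemma pdx_eq (hf : Nice f) (x y : ℝ) :
    pdx f x y = fderiv ℝ (Function.uncurry f) (x, y) (1, 0) := by
  have h1 : HasFDerivAt (Function.uncurry f) (fderiv ℝ (Function.uncurry f) (x, y)) (x, y) :=
    (hf.diffAt (x, y)).hasFDerivAt
  have h2 : HasDerivAt (fun x' => ((x' : ℝ), y)) ((1 : ℝ), (0 : ℝ)) x :=
    (hasDerivAt_id x).prodMk (hasDerivAt_const x y)
  have h3 : HasDerivAt (fun x' => f x' y) (fderiv ℝ (Function.uncurry f) (x, y) (1, 0)) x :=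
    (by have := h1.comp_hasDerivAt x h2; exact this)
  exact h3.deriv

lemma pdy_eq (hf : Nice f) (x y : ℝ) :
    pdy f x y = fderiv ℝ (Function.uncurry f) (x, y) (0, 1) := by
  have h1 : HasFDerivAt (Function.uncurry f) (fderiv ℝ (Function.uncurry f) (x, y)) (x, y) :=
    (hf.diffAt (x, y)).hasFDerivAt
  have h2 : HasDerivAt (fun y' => ((x : ℝ), (y' : ℝ))) ((0 : ℝ), (1 : ℝ)) y :=
    (hasDerivAt_const y x).prodMk (hasDerivAt_id y)
  exact (h1.comp_hasDerivAt y h2).deriv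

lemma uncurry_pdx (hf : Nice f) :
    Function.uncurry (pdx f) = fun p => fderiv ℝ (Function.uncurry f) p (1, 0) :=
  funext fun p => hf.pdx_eq p.1 p.2

lemma uncurry_pdy (hf : Nice f) :
    Function.uncurry (pdy f) = fun p => fderiv ℝ (Function.uncurry f) p (0, 1) :=
  funext fun p => hf.pdy_eq p.1 p.2

lemma fderiv_smooth (hf : Nice f) :
    ContDiff ℝ (⊤ : ℕ∞) (fderiv ℝ (Function.uncurry f)) :=
  hf.smooth.fderiv_right (le_of_eq (by simp))

lemma smooth_pdx (hf : Nice f) : ContDiff ℝ (⊤ : ℕ∞) (Function.uncurry (pdx f)) := by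
  rw [hf.uncurry_pdx]
  exact hf.fderiv_smooth.clm_apply contDiff_const

lemma smooth_pdy (hf : Nice f) : ContDiff ℝ (⊤ : ℕ∞) (Function.uncurry (pdy f)) := by
  rw [hf.uncurry_pdy]
  exact hf.fderiv_smooth.clm_apply contDiff_const

lemma per_pdx (hf : Nice f) : PerX (pdx f) := by
  intro y x
  show pdx f (x + 2 * π) y = pdx f x y
  unfold pdx
  have := deriv_comp_add_const (f := fun x' => f x' y) (a := 2 * π) (x := x)
  rw [← this]
  congr 1
  funext t
  exact hf.per y t

lemma per_pdy (hf : Nice f) : PerX (pdy f) := by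
  intro y x
  show pdy f (x + 2 * π) y = pdy f x y
  unfold pdy
  congr 1
  funext t
  exact hf.per t x

lemma decay_pdx (hf : Nice f) : RapidDecay (pdx f) := by
  intro k n
  obtain ⟨C, hC⟩ := hf.decay (k + 1) n
  refine ⟨C, fun x y => ?_⟩
  have h1 : ‖iteratedFDeriv ℝ k (Function.uncurry (pdx f)) (x, y)‖
      ≤ ‖((1 : ℝ), (0 : ℝ))‖ * ‖iteratedFDeriv ℝ k (fderiv ℝ (Function.uncurry f)) (x, y)‖ := by
    rw [hf.uncurry_pdx]
    exact norm_iteratedFDeriv_clm_apply_const (hf.fderiv_smooth.contDiffAt) (by exact_mod_cast le_top)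
  have h2 : ‖((1 : ℝ), (0 : ℝ))‖ = 1 := by
    simp [Prod.norm_def]
  rw [h2, one_mul, norm_iteratedFDeriv_fderiv] at h1
  calc |y| ^ n * ‖iteratedFDeriv ℝ k (Function.uncurry (pdx f)) (x, y)‖
      ≤ |y| ^ n * ‖iteratedFDeriv ℝ (k + 1) (Function.uncurry f) (x, y)‖ :=
        mul_le_mul_of_nonneg_left h1 (by positivity)
    _ ≤ C := hC x y

lemma decay_pdy (hf : Nice f) : RapidDecay (pdy f) := by
  intro k n
  obtain ⟨C, hC⟩ := hf.decay (k + 1) n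
  refine ⟨C, fun x y => ?_⟩
  have h1 : ‖iteratedFDeriv ℝ k (Function.uncurry (pdy f)) (x, y)‖
      ≤ ‖((0 : ℝ), (1 : ℝ))‖ * ‖iteratedFDeriv ℝ k (fderiv ℝ (Function.uncurry f)) (x, y)‖ := by
    rw [hf.uncurry_pdy]
    exact norm_iteratedFDeriv_clm_apply_const (hf.fderiv_smooth.contDiffAt) (by exact_mod_cast le_top)
  have h2 : ‖((0 : ℝ), (1 : ℝ))‖ = 1 := by
    simp [Prod.norm_def]
  rw [h2, one_mul, norm_iteratedFDeriv_fderiv] at h1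
  calc |y| ^ n * ‖iteratedFDeriv ℝ k (Function.uncurry (pdy f)) (x, y)‖
      ≤ |y| ^ n * ‖iteratedFDeriv ℝ (k + 1) (Function.uncurry f) (x, y)‖ :=
        mul_le_mul_of_nonneg_left h1 (by positivity)
    _ ≤ C := hC x y

lemma pdx' (hf : Nice f) : Nice (pdx f) := ⟨hf.smooth_pdx, hf.per_pdx, hf.decay_pdx⟩
lemma pdy' (hf : Nice f) : Nice (pdy f) := ⟨hf.smooth_pdy, hf.per_pdy, hf.decay_pdy⟩


-- symmetry of second derivatives
lemma pdx_pdy_comm (hf : Nice f) (x y : ℝ) : pdx (pdy f) x y = pdy (pdx f) x y := by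
  set F := Function.uncurry f with hF
  set A := fderiv ℝ (fderiv ℝ F) (x, y) with hA
  have hA' : HasFDerivAt (fderiv ℝ F) A (x, y) :=
    ((hf.fderiv_smooth.differentiable (by simp)) (x, y)).hasFDerivAt
  have hsym : A (1, 0) (0, 1) = A (0, 1) (1, 0) :=
    second_derivative_symmetric (fun p => (hf.diffAt p).hasFDerivAt) hA' _ _
  have e1 : pdx (pdy f) x y = A (1, 0) (0, 1) := by
    have h2 : HasDerivAt (fun x' => ((x' : ℝ), y)) ((1 : ℝ), (0 : ℝ)) x :=
      (hasDerivAt_id x).prodMk (hasDerivAt_const x y)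
    have hL : HasFDerivAt (fun p => fderiv ℝ F p (0, 1))
        ((ContinuousLinearMap.apply ℝ ℝ ((0 : ℝ), (1 : ℝ))).comp A) (x, y) :=
      (ContinuousLinearMap.apply ℝ ℝ ((0 : ℝ), (1 : ℝ))).hasFDerivAt.comp (x, y) hA'
    have h4 : HasDerivAt (fun x' => fderiv ℝ F (x', y) (0, 1)) (A (1, 0) (0, 1)) x :=
      by have := hL.comp_hasDerivAt x h2; exact this
    have h5 : (fun x' => pdy f x' y) = fun x' => fderiv ℝ F (x', y) (0, 1) :=
      funext fun x' => hf.pdy_eq x' y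
    show deriv (fun x' => pdy f x' y) x = _
    rw [h5]
    exact h4.deriv
  have e2 : pdy (pdx f) x y = A (0, 1) (1, 0) := by
    have h2 : HasDerivAt (fun y' => ((x : ℝ), (y' : ℝ))) ((0 : ℝ), (1 : ℝ)) y :=
      (hasDerivAt_const y x).prodMk (hasDerivAt_id y)
    have hL : HasFDerivAt (fun p => fderiv ℝ F p (1, 0))
        ((ContinuousLinearMap.apply ℝ ℝ ((1 : ℝ), (0 : ℝ))).comp A) (x, y) :=
      (ContinuousLinearMap.apply ℝ ℝ ((1 : ℝ), (0 : ℝ))).hasFDerivAt.comp (x, y) hA'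
    have h4 : HasDerivAt (fun y' => fderiv ℝ F (x, y') (1, 0)) (A (0, 1) (1, 0)) y :=
      hL.comp_hasDerivAt y h2
    have h5 : (fun y' => pdx f x y') = fun y' => fderiv ℝ F (x, y') (1, 0) :=
      funext fun y' => hf.pdx_eq x y'
    show deriv (fun y' => pdx f x y') y = _
    rw [h5]
    exact h4.deriv
  rw [e1, e2, hsym]

lemma pdx_pdy_comm' (hf : Nice f) : pdx (pdy f) = pdy (pdx f) :=
  funext fun x => funext fun y => hf.pdx_pdy_comm x y

-- algebra
lemma add (hf : Nice f) (hg : Nice g) : Nice (fun x y => f x y + g x y) := by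
  refine ⟨?_, ?_, ?_⟩
  · exact hf.smooth.add hg.smooth
  · intro y x
    exact congrArg₂ HAdd.hAdd (hf.per y x) (hg.per y x)
  · intro k n
    obtain ⟨C1, h1⟩ := hf.decay k n
    obtain ⟨C2, h2⟩ := hg.decay k n
    refine ⟨C1 + C2, fun x y => ?_⟩
    have hfun : (Function.uncurry fun x y => f x y + g x y)
        = Function.uncurry f + Function.uncurry g := rfl
    rw [hfun]
    have hadd := iteratedFDeriv_add_apply (i := k)
      (hf.smooth.of_le (by exact_mod_cast le_top)).contDiffAt (hg.smooth.of_le (by exact_mod_cast le_top)).contDiffAt (x := (x, y))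
    calc |y| ^ n * ‖iteratedFDeriv ℝ k (Function.uncurry f + Function.uncurry g) (x, y)‖
        = |y| ^ n * ‖iteratedFDeriv ℝ k (Function.uncurry f) (x, y)
            + iteratedFDeriv ℝ k (Function.uncurry g) (x, y)‖ := by rw [hadd]
      _ ≤ |y| ^ n * (‖iteratedFDeriv ℝ k (Function.uncurry f) (x, y)‖
            + ‖iteratedFDeriv ℝ k (Function.uncurry g) (x, y)‖) :=
          mul_le_mul_of_nonneg_left (norm_add_le _ _) (by positivity)
      _ = |y| ^ n * ‖iteratedFDeriv ℝ k (Function.uncurry f) (x, y)‖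
            + |y| ^ n * ‖iteratedFDeriv ℝ k (Function.uncurry g) (x, y)‖ := by ring
      _ ≤ C1 + C2 := add_le_add (h1 x y) (h2 x y)

lemma const_mul (hf : Nice f) (c : ℝ) : Nice (fun x y => c * f x y) := by
  refine ⟨?_, ?_, ?_⟩
  · exact contDiff_const.mul hf.smooth
  · intro y x
    exact congrArg (fun t => c * t) (hf.per y x)
  · intro k n
    obtain ⟨C1, h1⟩ := hf.decay k n
    have h1nn : 0 ≤ C1 := le_trans (by positivity) (h1 0 0)
    refine ⟨|c| * C1, fun x y => ?_⟩
    have hfun : (Function.uncurry fun x y => c * f x y) = c • (Function.uncurry f) := by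
      funext p; simp [Function.uncurry, smul_eq_mul]
    rw [hfun, iteratedFDeriv_const_smul_apply (hf.smooth.of_le (by exact_mod_cast le_top)).contDiffAt]
    have hn : ‖c • iteratedFDeriv ℝ k (Function.uncurry f) (x, y)‖
        = ‖c‖ * ‖iteratedFDeriv ℝ k (Function.uncurry f) (x, y)‖ :=
      norm_smul c (iteratedFDeriv ℝ k (Function.uncurry f) (x, y))
    rw [hn]
    calc |y| ^ n * (‖c‖ * ‖iteratedFDeriv ℝ k (Function.uncurry f) (x, y)‖)
        = |c| * (|y| ^ n * ‖iteratedFDeriv ℝ k (Function.uncurry f) (x, y)‖) := by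
          rw [Real.norm_eq_abs]; ring
      _ ≤ |c| * C1 := mul_le_mul_of_nonneg_left (h1 x y) (abs_nonneg c)

lemma mul (hf : Nice f) (hg : Nice g) : Nice (fun x y => f x y * g x y) := by
  refine ⟨?_, ?_, ?_⟩
  · exact hf.smooth.mul hg.smooth
  · intro y x
    exact congrArg₂ HMul.hMul (hf.per y x) (hg.per y x)
  · intro k n
    classical
    choose C1 h1 using fun i => hf.decay i n
    choose C2 h2 using fun i => hg.decay i 0
    refine ⟨∑ i ∈ Finset.range (k + 1), (k.choose i : ℝ) * C1 i * C2 (k - i), fun x y => ?_⟩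
    have hm := norm_iteratedFDeriv_mul_le (𝕜 := ℝ) (N := ((⊤ : ℕ∞) : WithTop ℕ∞))
      (hf.smooth.of_le (by exact_mod_cast le_top)) (hg.smooth.of_le (by exact_mod_cast le_top)) ((x, y) : ℝ × ℝ) (n := k) (by exact_mod_cast le_top)
    have : Function.uncurry (fun x y => f x y * g x y)
        = fun p => Function.uncurry f p * Function.uncurry g p := rfl
    rw [this]
    calc |y| ^ n * ‖iteratedFDeriv ℝ k (fun p => Function.uncurry f p * Function.uncurry g p) (x, y)‖
        ≤ |y| ^ n * ∑ i ∈ Finset.range (k + 1),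
            (k.choose i : ℝ) * ‖iteratedFDeriv ℝ i (Function.uncurry f) (x, y)‖
              * ‖iteratedFDeriv ℝ (k - i) (Function.uncurry g) (x, y)‖ :=
          mul_le_mul_of_nonneg_left hm (by positivity)
      _ = ∑ i ∈ Finset.range (k + 1), (k.choose i : ℝ)
            * (|y| ^ n * ‖iteratedFDeriv ℝ i (Function.uncurry f) (x, y)‖)
            * ‖iteratedFDeriv ℝ (k - i) (Function.uncurry g) (x, y)‖ := by
          rw [Finset.mul_sum]; congr 1; funext i; ring
      _ ≤ ∑ i ∈ Finset.range (k + 1), (k.choose i : ℝ) * C1 i * C2 (k - i) := by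
          apply Finset.sum_le_sum
          intro i _
          have e2 : ‖iteratedFDeriv ℝ (k - i) (Function.uncurry g) (x, y)‖ ≤ C2 (k - i) := by
            have := h2 (k - i) x y
            simpa using this
          have hC1nn : 0 ≤ (k.choose i : ℝ) * C1 i := by
            have := h1 i x y
            have h1nn : 0 ≤ C1 i := le_trans (by positivity) this
            positivity
          apply mul_le_mul
          · exact mul_le_mul_of_nonneg_left (h1 i x y) (by positivity)
          · exact e2
          · positivity
          · exact hC1nn

lemma bound (hf : Nice f) : ∃ C : ℝ, 0 ≤ C ∧ ∀ x y : ℝ, |f x y| ≤ C * (1 + y ^ 2)⁻¹ := by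
  obtain ⟨C0, h0⟩ := hf.decay 0 0
  obtain ⟨C2, h2⟩ := hf.decay 0 2
  have habs : ∀ x y : ℝ, ‖iteratedFDeriv ℝ 0 (Function.uncurry f) (x, y)‖ = |f x y| := by
    intro x y
    rw [norm_iteratedFDeriv_zero]
    rfl
  have h0' : ∀ x y : ℝ, |f x y| ≤ C0 := by
    intro x y; have := h0 x y; rwa [habs, pow_zero, one_mul] at this
  have h2' : ∀ x y : ℝ, y ^ 2 * |f x y| ≤ C2 := by
    intro x y; have := h2 x y; rwa [habs, sq_abs] at this
  refine ⟨C0 + C2, ?_, ?_⟩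
  · have := h0' 0 0
    have h2nn : 0 ≤ C2 := le_trans (by positivity) (h2' 0 0)
    have h0nn : 0 ≤ C0 := le_trans (abs_nonneg _) this
    linarith
  · intro x y
    have hpos : (0:ℝ) < 1 + y ^ 2 := by positivity
    have key : |f x y| * (1 + y ^ 2) ≤ C0 + C2 := by nlinarith [h0' x y, h2' x y]
    calc |f x y| = (|f x y| * (1 + y ^ 2)) * (1 + y ^ 2)⁻¹ := by field_simp
      _ ≤ (C0 + C2) * (1 + y ^ 2)⁻¹ :=
          mul_le_mul_of_nonneg_right key (by positivity)


lemma sq (hf : Nice f) : Nice (fun x y => f x y ^ 2) := by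
  have h := hf.mul hf
  have : (fun x y => f x y ^ 2) = fun x y => f x y * f x y := by
    funext x y; ring
  rw [this]; exact h


-- basic continuity
lemma contU (hf : Nice f) : Continuous (Function.uncurry f) := hf.smooth.continuous

lemma contX (hf : Nice f) (y : ℝ) : Continuous (fun x => f x y) :=
  hf.contU.comp (continuous_id.prodMk continuous_const)

lemma intInt (hf : Nice f) (y a b : ℝ) : IntervalIntegrable (fun x => f x y) volume a b :=
  (hf.contX y).intervalIntegrable a b

lemma pdy_add (hf : Nice f) (hg : Nice g) (x y : ℝ) :
    pdy (fun x y => f x y + g x y) x y = pdy f x y + pdy g x y :=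
  ((hf.hasDerivAt_y x y).add (hg.hasDerivAt_y x y)).deriv

lemma pdy_mul (hf : Nice f) (hg : Nice g) (x y : ℝ) :
    pdy (fun x y => f x y * g x y) x y = pdy f x y * g x y + f x y * pdy g x y :=
  ((hf.hasDerivAt_y x y).mul (hg.hasDerivAt_y x y)).deriv

-- parametric integrals
lemma contParam (hf : Nice f) : Continuous (fun y => ∫ x in (0:ℝ)..(2 * π), f x y) := by
  have h : Continuous (Function.uncurry fun (y x : ℝ) => f x y) :=
    hf.contU.comp continuous_swap
  exact intervalIntegral.continuous_parametric_intervalIntegral_of_continuous' h 0 (2 * π)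

lemma boundParam (hf : Nice f) : ∃ C : ℝ, 0 ≤ C ∧ ∀ y : ℝ,
    |∫ x in (0:ℝ)..(2 * π), f x y| ≤ C * (1 + y ^ 2)⁻¹ := by
  obtain ⟨C, hC0, hC⟩ := hf.bound
  refine ⟨2 * π * C, by positivity, fun y => ?_⟩
  have h := intervalIntegral.norm_integral_le_of_norm_le_const
    (f := fun x => f x y) (a := 0) (b := 2 * π) (C := C * (1 + y ^ 2)⁻¹)
    (fun x _ => by simpa [Real.norm_eq_abs] using hC x y)
  rw [Real.norm_eq_abs] at h
  calc |∫ x in (0:ℝ)..(2 * π), f x y| ≤ C * (1 + y ^ 2)⁻¹ * |2 * π - 0| := h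
    _ = 2 * π * C * (1 + y ^ 2)⁻¹ := by
        rw [sub_zero, abs_of_pos Real.two_pi_pos]; ring

lemma integrableParam (hf : Nice f) : Integrable (fun y => ∫ x in (0:ℝ)..(2 * π), f x y) := by
  obtain ⟨C, hC0, hC⟩ := hf.boundParam
  refine Integrable.mono' ((integrable_inv_one_add_sq).const_mul C)
    hf.contParam.aestronglyMeasurable ?_
  exact Filter.Eventually.of_forall fun y => by
    simpa [Real.norm_eq_abs] using hC y

lemma hasDerivAt_param (hf : Nice f) (y : ℝ) :
    HasDerivAt (fun t => ∫ x in (0:ℝ)..(2 * π), f x t)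
      (∫ x in (0:ℝ)..(2 * π), pdy f x y) y := by
  obtain ⟨C, hC0, hC⟩ := hf.pdy'.bound
  have hbd : ∀ x t : ℝ, |pdy f x t| ≤ C := fun x t =>
    le_trans (hC x t) (by
      have h1 : (1 + t ^ 2)⁻¹ ≤ 1 := by
        rw [inv_le_one_iff₀]; right; nlinarith [sq_nonneg t]
      nlinarith [hC0])
  have := intervalIntegral.hasDerivAt_integral_of_dominated_loc_of_deriv_le
    (F := fun t x => f x t) (F' := fun t x => pdy f x t) (x₀ := y)
    (s := Metric.ball y 1) (bound := fun _ => C) (Metric.ball_mem_nhds y one_pos)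
    (Filter.Eventually.of_forall fun t => (hf.contX t).aestronglyMeasurable)
    (hf.intInt y 0 (2 * π))
    ((hf.pdy'.contX y).aestronglyMeasurable)
    (Filter.Eventually.of_forall fun x _ t _ => by
      simpa [Real.norm_eq_abs] using hbd x t)
    (intervalIntegrable_const)
    (Filter.Eventually.of_forall fun x _ t _ => hf.hasDerivAt_y x t)
  exact this.2

lemma zeroAvg_pdx (hf : Nice f) : ZeroAvgX (pdx f) := by
  intro y
  have h := intervalIntegral.integral_eq_sub_of_hasDerivAt
    (f := fun x => f x y) (f' := fun x => pdx f x y) (a := 0) (b := 2 * π)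
    (fun x _ => hf.hasDerivAt_x x y) (hf.pdx'.intInt y 0 (2 * π))
  rw [h]
  have hper := hf.per y 0
  simp only [zero_add] at hper
  show f (2 * π) y - f 0 y = 0
  rw [hper, sub_self]

lemma zeroAvg_pdy (hf : Nice f) (h0 : ZeroAvgX f) : ZeroAvgX (pdy f) := by
  intro y
  have h := hf.hasDerivAt_param y
  have hfun : (fun t => ∫ x in (0:ℝ)..(2 * π), f x t) = fun _ => (0 : ℝ) :=
    funext fun t => h0 t
  rw [hfun] at h
  exact h.unique (hasDerivAt_const y 0)


end Nice

-- Cauchy-Schwarz for integrals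
lemma cs_integral {α : Type*} [MeasurableSpace α] {μ : Measure α} {f g : α → ℝ}
    (hfg : Integrable (fun a => f a * g a) μ) (hf2 : Integrable (fun a => f a ^ 2) μ)
    (hg2 : Integrable (fun a => g a ^ 2) μ) :
    (∫ a, f a * g a ∂μ) ^ 2 ≤ (∫ a, f a ^ 2 ∂μ) * (∫ a, g a ^ 2 ∂μ) := by
  have key : ∀ t : ℝ, 0 ≤ (∫ a, g a ^ 2 ∂μ) * (t * t)
      + (2 * ∫ a, f a * g a ∂μ) * t + (∫ a, f a ^ 2 ∂μ) := by
    intro t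
    have hint : Integrable (fun a => (t * g a + f a) ^ 2) μ := by
      have : (fun a => (t * g a + f a) ^ 2)
          = fun a => t ^ 2 * g a ^ 2 + (2 * t) * (f a * g a) + f a ^ 2 := by
        funext a; ring
      rw [this]
      exact ((hg2.const_mul (t ^ 2)).add (hfg.const_mul (2 * t))).add hf2
    have h0 : 0 ≤ ∫ a, (t * g a + f a) ^ 2 ∂μ :=
      integral_nonneg fun a => sq_nonneg _
    have hexp : ∫ a, (t * g a + f a) ^ 2 ∂μ
        = t ^ 2 * (∫ a, g a ^ 2 ∂μ) + (2 * t) * (∫ a, f a * g a ∂μ) + ∫ a, f a ^ 2 ∂μ := by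
      have e : (fun a => (t * g a + f a) ^ 2)
          = fun a => t ^ 2 * g a ^ 2 + (2 * t) * (f a * g a) + f a ^ 2 := by
        funext a; ring
      rw [e]
      rw [integral_add (f := fun a => t ^ 2 * g a ^ 2 + 2 * t * (f a * g a))
        (g := fun a => f a ^ 2) ((hg2.const_mul (t ^ 2)).add (hfg.const_mul (2 * t))) hf2]
      rw [integral_add (f := fun a => t ^ 2 * g a ^ 2) (g := fun a => 2 * t * (f a * g a))
        (hg2.const_mul (t ^ 2)) (hfg.const_mul (2 * t))]
      rw [MeasureTheory.integral_const_mul, MeasureTheory.integral_const_mul]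
    nlinarith [h0, hexp]
  have hd := discrim_le_zero key
  rw [discrim] at hd
  nlinarith [hd]

lemma abs_integral_mul_le {α : Type*} [MeasurableSpace α] {μ : Measure α} {f g : α → ℝ}
    (hfg : Integrable (fun a => f a * g a) μ) (hf2 : Integrable (fun a => f a ^ 2) μ)
    (hg2 : Integrable (fun a => g a ^ 2) μ) :
    |∫ a, f a * g a ∂μ| ≤ Real.sqrt (∫ a, f a ^ 2 ∂μ) * Real.sqrt (∫ a, g a ^ 2 ∂μ) := by
  have h1 : |∫ a, f a * g a ∂μ| = Real.sqrt ((∫ a, f a * g a ∂μ) ^ 2) :=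
    (Real.sqrt_sq_eq_abs _).symm
  rw [h1, ← Real.sqrt_mul (integral_nonneg fun a => sq_nonneg (f a))]
  exact Real.sqrt_le_sqrt (cs_integral hfg hf2 hg2)

noncomputable def J (f : ℝ → ℝ → ℝ) : ℝ := ∫ y : ℝ, ∫ x in (0:ℝ)..(2 * π), f x y

section Jlemmas
variable {f g : ℝ → ℝ → ℝ}

lemma J_sq_nonneg (f : ℝ → ℝ → ℝ) : 0 ≤ J (fun x y => f x y ^ 2) :=
  integral_nonneg fun y =>
    intervalIntegral.integral_nonneg Real.two_pi_pos.le fun x _ => sq_nonneg _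

lemma J_add (hf : Nice f) (hg : Nice g) :
    J (fun x y => f x y + g x y) = J f + J g := by
  unfold J
  have hinner : ∀ y : ℝ, ∫ x in (0:ℝ)..(2 * π), (f x y + g x y)
      = (∫ x in (0:ℝ)..(2 * π), f x y) + ∫ x in (0:ℝ)..(2 * π), g x y := fun y =>
    intervalIntegral.integral_add (hf.intInt y 0 (2 * π)) (hg.intInt y 0 (2 * π))
  rw [integral_congr_ae (Filter.Eventually.of_forall hinner)]
  exact integral_add hf.integrableParam hg.integrableParam

-- inner Cauchy-Schwarz at fixed y
lemma inner_cs (hf : Nice f) (hg : Nice g) (y : ℝ) :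
    |∫ x in (0:ℝ)..(2 * π), f x y * g x y| ≤
      Real.sqrt (∫ x in (0:ℝ)..(2 * π), f x y ^ 2)
        * Real.sqrt (∫ x in (0:ℝ)..(2 * π), g x y ^ 2) := by
  have h2π : (0:ℝ) ≤ 2 * π := Real.two_pi_pos.le
  rw [intervalIntegral.integral_of_le h2π, intervalIntegral.integral_of_le h2π,
    intervalIntegral.integral_of_le h2π]
  exact abs_integral_mul_le ((hf.mul hg).intInt y 0 (2 * π)).1
    ((hf.sq).intInt y 0 (2 * π)).1 ((hg.sq).intInt y 0 (2 * π)).1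

lemma J_cs_abs (hf : Nice f) (hg : Nice g) :
    ∫ y : ℝ, |∫ x in (0:ℝ)..(2 * π), f x y * g x y| ≤
      Real.sqrt (J (fun x y => f x y ^ 2)) * Real.sqrt (J (fun x y => g x y ^ 2)) := by
  set F := fun y => ∫ x in (0:ℝ)..(2 * π), f x y ^ 2 with hF
  set G := fun y => ∫ x in (0:ℝ)..(2 * π), g x y ^ 2 with hG
  have hFnn : ∀ y, 0 ≤ F y := fun y =>
    intervalIntegral.integral_nonneg Real.two_pi_pos.le fun x _ => sq_nonneg _
  have hGnn : ∀ y, 0 ≤ G y := fun y =>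
    intervalIntegral.integral_nonneg Real.two_pi_pos.le fun x _ => sq_nonneg _
  have hFi : Integrable F := hf.sq.integrableParam
  have hGi : Integrable G := hg.sq.integrableParam
  have hPc : Continuous (fun y => ∫ x in (0:ℝ)..(2 * π), f x y * g x y) :=
    (hf.mul hg).contParam
  have hPi : Integrable (fun y => |∫ x in (0:ℝ)..(2 * π), f x y * g x y|) :=
    (hf.mul hg).integrableParam.abs
  have hsqc : Continuous (fun y => Real.sqrt (F y) * Real.sqrt (G y)) :=
    ((hf.sq.contParam).sqrt).mul ((hg.sq.contParam).sqrt)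
  have hsqb : ∀ y, Real.sqrt (F y) * Real.sqrt (G y) ≤ (F y + G y) / 2 := by
    intro y
    nlinarith [Real.sq_sqrt (hFnn y), Real.sq_sqrt (hGnn y),
      sq_nonneg (Real.sqrt (F y) - Real.sqrt (G y)), Real.sqrt_nonneg (F y),
      Real.sqrt_nonneg (G y)]
  have hsqi : Integrable (fun y => Real.sqrt (F y) * Real.sqrt (G y)) := by
    refine Integrable.mono' (((hFi.add hGi)).div_const 2) hsqc.aestronglyMeasurable ?_
    refine Filter.Eventually.of_forall fun y => ?_
    rw [Real.norm_eq_abs, abs_of_nonneg (by positivity)]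
    exact hsqb y
  have step1 : ∫ y : ℝ, |∫ x in (0:ℝ)..(2 * π), f x y * g x y|
      ≤ ∫ y : ℝ, Real.sqrt (F y) * Real.sqrt (G y) :=
    integral_mono hPi hsqi fun y => inner_cs hf hg y
  have step2 : ∫ y : ℝ, Real.sqrt (F y) * Real.sqrt (G y)
      ≤ Real.sqrt (J (fun x y => f x y ^ 2)) * Real.sqrt (J (fun x y => g x y ^ 2)) := by
    have hcs : (∫ y : ℝ, Real.sqrt (F y) * Real.sqrt (G y)) ^ 2
        ≤ (∫ y : ℝ, Real.sqrt (F y) ^ 2) * ∫ y : ℝ, Real.sqrt (G y) ^ 2 := by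
      refine cs_integral hsqi ?_ ?_
      · have : (fun y => Real.sqrt (F y) ^ 2) = F := by
          funext y; exact Real.sq_sqrt (hFnn y)
        rw [this]; exact hFi
      · have : (fun y => Real.sqrt (G y) ^ 2) = G := by
          funext y; exact Real.sq_sqrt (hGnn y)
        rw [this]; exact hGi
    have eF : (∫ y : ℝ, Real.sqrt (F y) ^ 2) = J (fun x y => f x y ^ 2) := by
      apply integral_congr_ae (Filter.Eventually.of_forall fun y => Real.sq_sqrt (hFnn y))
    have eG : (∫ y : ℝ, Real.sqrt (G y) ^ 2) = J (fun x y => g x y ^ 2) := by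
      apply integral_congr_ae (Filter.Eventually.of_forall fun y => Real.sq_sqrt (hGnn y))
    rw [eF, eG] at hcs
    have hnn : 0 ≤ ∫ y : ℝ, Real.sqrt (F y) * Real.sqrt (G y) :=
      integral_nonneg fun y => by positivity
    calc ∫ y : ℝ, Real.sqrt (F y) * Real.sqrt (G y)
        = Real.sqrt ((∫ y : ℝ, Real.sqrt (F y) * Real.sqrt (G y)) ^ 2) :=
          (Real.sqrt_sq hnn).symm
      _ ≤ Real.sqrt (J (fun x y => f x y ^ 2) * J (fun x y => g x y ^ 2)) :=
          Real.sqrt_le_sqrt hcs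
      _ = Real.sqrt (J (fun x y => f x y ^ 2)) * Real.sqrt (J (fun x y => g x y ^ 2)) :=
          Real.sqrt_mul (J_sq_nonneg f) _
  exact le_trans step1 step2

lemma J_cs (hf : Nice f) (hg : Nice g) :
    |J (fun x y => f x y * g x y)| ≤
      Real.sqrt (J (fun x y => f x y ^ 2)) * Real.sqrt (J (fun x y => g x y ^ 2)) := by
  refine le_trans ?_ (J_cs_abs hf hg)
  unfold J
  have h := MeasureTheory.norm_integral_le_integral_norm
    (f := fun y => ∫ x in (0:ℝ)..(2 * π), f x y * g x y) (μ := volume)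
  simpa [Real.norm_eq_abs] using h

end Jlemmas

section IBP
variable {f g : ℝ → ℝ → ℝ}

lemma tendsto_bound_atTop (C : ℝ) :
    Tendsto (fun t : ℝ => C * (1 + t ^ 2)⁻¹) atTop (𝓝 0) := by
  have h1 : Tendsto (fun t : ℝ => 1 + t ^ 2) atTop atTop :=
    tendsto_atTop_add_const_left atTop 1 (tendsto_pow_atTop two_ne_zero)
  have h2 : Tendsto (fun t : ℝ => (1 + t ^ 2)⁻¹) atTop (𝓝 0) := h1.inv_tendsto_atTop
  simpa using h2.const_mul C

lemma tendsto_bound_atBot (C : ℝ) :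
    Tendsto (fun t : ℝ => C * (1 + t ^ 2)⁻¹) atBot (𝓝 0) := by
  have h := (tendsto_bound_atTop C).comp tendsto_neg_atBot_atTop
  have e : ((fun t : ℝ => C * (1 + t ^ 2)⁻¹) ∘ fun t : ℝ => -t)
      = fun t : ℝ => C * (1 + t ^ 2)⁻¹ := by
    funext t; simp [Function.comp, neg_sq]
  rwa [e] at h

-- a Nice function has vanishing total y-derivative integral
lemma integral_pdy_param_eq_zero (hf : Nice f) :
    ∫ t : ℝ, ∫ x in (0:ℝ)..(2 * π), pdy f x t = 0 := by
  set H := fun t : ℝ => ∫ x in (0:ℝ)..(2 * π), f x t with hH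
  set K := fun t : ℝ => ∫ x in (0:ℝ)..(2 * π), pdy f x t with hK
  have hKi : Integrable K := hf.pdy'.integrableParam
  have hderiv : ∀ t : ℝ, HasDerivAt H (K t) t := fun t => hf.hasDerivAt_param t
  obtain ⟨C, hC0, hC⟩ := hf.boundParam
  have htop : Tendsto H atTop (𝓝 0) :=
    squeeze_zero_norm (fun t => by simpa [Real.norm_eq_abs] using hC t)
      (tendsto_bound_atTop C)
  have hbot : Tendsto H atBot (𝓝 0) :=
    squeeze_zero_norm (fun t => by simpa [Real.norm_eq_abs] using hC t)
      (tendsto_bound_atBot C)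
  have hIoi : ∫ t in Ioi (0:ℝ), K t = 0 - H 0 :=
    integral_Ioi_of_hasDerivAt_of_tendsto' (fun t _ => hderiv t)
      hKi.integrableOn htop
  have hIic : ∫ t in Iic (0:ℝ), K t = H 0 - 0 :=
    integral_Iic_of_hasDerivAt_of_tendsto' (fun t _ => hderiv t)
      hKi.integrableOn hbot
  have hsplit : ∫ t : ℝ, K t = (∫ t in Iic (0:ℝ), K t) + ∫ t in Ioi (0:ℝ), K t :=
    (integral_Iic_add_Ioi hKi.integrableOn hKi.integrableOn).symm
  rw [hsplit, hIoi, hIic]; ring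

lemma J_ibp_y (hf : Nice f) (hg : Nice g) :
    J (fun x y => f x y * pdy g x y) = - J (fun x y => pdy f x y * g x y) := by
  have hm : Nice (fun x y => f x y * g x y) := hf.mul hg
  have hzero := integral_pdy_param_eq_zero hm
  have hinner : ∀ t : ℝ, (∫ x in (0:ℝ)..(2 * π), pdy (fun x y => f x y * g x y) x t)
      = (∫ x in (0:ℝ)..(2 * π), pdy f x t * g x t)
        + ∫ x in (0:ℝ)..(2 * π), f x t * pdy g x t := by
    intro t
    rw [intervalIntegral.integral_congr (g := fun x => pdy f x t * g x t + f x t * pdy g x t)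
      (fun x _ => hf.pdy_mul hg x t)]
    exact intervalIntegral.integral_add ((hf.pdy'.mul hg).intInt t 0 (2 * π))
      ((hf.mul hg.pdy').intInt t 0 (2 * π))
  rw [integral_congr_ae (Filter.Eventually.of_forall hinner)] at hzero
  rw [integral_add (hf.pdy'.mul hg).integrableParam (hf.mul hg.pdy').integrableParam] at hzero
  unfold J
  linarith [hzero]

lemma J_ibp_x (hf : Nice f) (hg : Nice g) :
    J (fun x y => f x y * pdx g x y) = - J (fun x y => pdx f x y * g x y) := by
  have hinner : ∀ y : ℝ, (∫ x in (0:ℝ)..(2 * π), f x y * pdx g x y)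
      = - ∫ x in (0:ℝ)..(2 * π), pdx f x y * g x y := by
    intro y
    have hD : ∀ x : ℝ, HasDerivAt (fun x' => f x' y * g x' y)
        (pdx f x y * g x y + f x y * pdx g x y) x := fun x =>
      (hf.hasDerivAt_x x y).mul (hg.hasDerivAt_x x y)
    have hsub := intervalIntegral.integral_eq_sub_of_hasDerivAt
      (f := fun x => f x y * g x y)
      (f' := fun x => pdx f x y * g x y + f x y * pdx g x y) (a := 0) (b := 2 * π)
      (fun x _ => hD x) (((hf.pdx'.mul hg).add (hf.mul hg.pdx')).intInt y 0 (2 * π))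
    have hper : f (2 * π) y * g (2 * π) y = f 0 y * g 0 y := by
      have h1 := hf.per y 0
      have h2 := hg.per y 0
      simp only [zero_add] at h1 h2
      rw [show f (2 * π) y = f 0 y from h1, show g (2 * π) y = g 0 y from h2]
    have hzero : (∫ x in (0:ℝ)..(2 * π), (pdx f x y * g x y + f x y * pdx g x y)) = 0 := by
      rw [hsub]
      show f (2 * π) y * g (2 * π) y - f 0 y * g 0 y = 0
      rw [hper, sub_self]
    rw [intervalIntegral.integral_add ((hf.pdx'.mul hg).intInt y 0 (2 * π))
      ((hf.mul hg.pdx').intInt y 0 (2 * π))] at hzero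
    linarith [hzero]
  unfold J
  rw [integral_congr_ae (Filter.Eventually.of_forall hinner)]
  exact integral_neg _

end IBP

section Sup
variable {f : ℝ → ℝ → ℝ}

-- Step 1: pointwise bound by the x-derivative L¹ norm, via zero average.
lemma sq_le_pdx_int (hf : Nice f) (h0 : ZeroAvgX f) (x y : ℝ) :
    f x y ^ 2 ≤ 2 * π * ∫ s in (0:ℝ)..(2 * π), pdx f s y ^ 2 := by
  have h2π : (0:ℝ) < 2 * π := Real.two_pi_pos
  set u' := fun s => pdx f s y with hu'
  set D := ∫ s in x..(x + 2 * π), |u' s| with hD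
  have hper : Function.Periodic (fun s => f s y) (2 * π) := hf.per y
  have hperabs : Function.Periodic (fun s => |u' s|) (2 * π) := fun s =>
    congrArg abs (hf.pdx'.per y s)
  -- integral of f over shifted period is zero
  have hshift : (∫ s in x..(x + 2 * π), f s y) = 0 := by
    have h := hper.intervalIntegral_add_eq x 0
    simp only [zero_add] at h
    rw [h]; exact h0 y
  -- D is the integral over the standard period
  have hDstd : D = ∫ s in (0:ℝ)..(2 * π), |u' s| := by
    have h := hperabs.intervalIntegral_add_eq x 0
    simp only [zero_add] at h
    exact h
  have hDnn : 0 ≤ D := by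
    rw [hD]
    exact intervalIntegral.integral_nonneg (by linarith) fun s _ => abs_nonneg _
  -- |f x y - f s y| ≤ D for s in the period interval
  have key1 : ∀ s ∈ Set.Icc x (x + 2 * π), |f x y - f s y| ≤ D := by
    intro s hs
    have hxs : x ≤ s := hs.1
    have hsx : s ≤ x + 2 * π := hs.2
    have hsub : (∫ t in x..s, u' t) = f s y - f x y :=
      intervalIntegral.integral_eq_sub_of_hasDerivAt
        (fun t _ => hf.hasDerivAt_x t y) (hf.pdx'.intInt y x s)
    have habs : |∫ t in x..s, u' t| ≤ ∫ t in x..s, |u' t| :=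
      intervalIntegral.abs_integral_le_integral_abs hxs
    have hmono : (∫ t in x..s, |u' t|) ≤ D := by
      rw [hD]
      have hadj := intervalIntegral.integral_add_adjacent_intervals
        ((hf.pdx'.contX y).abs.intervalIntegrable (μ := volume) x s)
        ((hf.pdx'.contX y).abs.intervalIntegrable (μ := volume) s (x + 2 * π))
      have hnn : 0 ≤ ∫ t in s..(x + 2 * π), |u' t| :=
        intervalIntegral.integral_nonneg hsx fun t _ => abs_nonneg _
      linarith [hadj, hnn]
    calc |f x y - f s y| = |∫ t in x..s, u' t| := by
          rw [hsub, abs_sub_comm]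
      _ ≤ ∫ t in x..s, |u' t| := habs
      _ ≤ D := hmono
  -- |f x y| ≤ D
  have key2 : |f x y| ≤ D := by
    have hconst : (∫ s in x..(x + 2 * π), (f x y - f s y))
        = f x y * (2 * π) := by
      rw [intervalIntegral.integral_sub (intervalIntegrable_const) (hf.intInt y x (x + 2 * π)),
        hshift, intervalIntegral.integral_const]
      simp [smul_eq_mul]
      ring
    have hbd := intervalIntegral.norm_integral_le_of_norm_le_const
      (f := fun s => f x y - f s y) (a := x) (b := x + 2 * π) (C := D)
      (fun s hs => by
        have hs' : s ∈ Set.Icc x (x + 2 * π) := by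
          rw [Set.uIoc_of_le (by linarith)] at hs
          exact ⟨hs.1.le, hs.2⟩
        simpa [Real.norm_eq_abs] using key1 s hs')
    rw [hconst] at hbd
    rw [Real.norm_eq_abs, abs_mul, abs_of_pos h2π] at hbd
    have : |x + 2 * π - x| = 2 * π := by
      rw [show x + 2 * π - x = 2 * π by ring, abs_of_pos h2π]
    rw [this] at hbd
    have := mul_le_mul_of_nonneg_right (le_of_eq (rfl : |f x y| * (2 * π) = |f x y| * (2 * π))) h2π.le
    nlinarith [hbd, h2π]
  -- D ≤ √(2π) √(∫ u'²)
  have key3 : D ≤ Real.sqrt (2 * π) * Real.sqrt (∫ s in (0:ℝ)..(2 * π), u' s ^ 2) := by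
    rw [hDstd]
    have h1 : (∫ s in (0:ℝ)..(2 * π), |u' s|)
        = ∫ s in Ioc (0:ℝ) (2 * π), |u' s| * 1 := by
      rw [intervalIntegral.integral_of_le h2π.le]
      congr 1; funext s; ring
    rw [h1]
    have hInt : Integrable (fun s => |u' s| * 1) (volume.restrict (Ioc (0:ℝ) (2 * π))) := by
      simpa [hu', IntegrableOn] using ((hf.pdx'.contX y).abs.intervalIntegrable (μ := volume) 0 (2 * π)).1
    have hInt2 : Integrable (fun s => |u' s| ^ 2) (volume.restrict (Ioc (0:ℝ) (2 * π))) := by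
      have : (fun s => |u' s| ^ 2) = fun s => u' s ^ 2 := by
        funext s; rw [sq_abs]
      rw [this]
      exact (hf.pdx'.sq.intInt y 0 (2 * π)).1
    have hInt3 : Integrable (fun _ : ℝ => (1:ℝ) ^ 2) (volume.restrict (Ioc (0:ℝ) (2 * π))) := by
      simp
    have habs := abs_integral_mul_le (f := fun s => |u' s|) (g := fun _ => (1:ℝ))
      (μ := volume.restrict (Ioc (0:ℝ) (2 * π))) hInt hInt2 hInt3
    have hval : (∫ _ in Ioc (0:ℝ) (2 * π), (1:ℝ) ^ 2) = 2 * π := by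
      simp [Real.volume_Ioc, Real.pi_nonneg]
    have hsq : (∫ s in Ioc (0:ℝ) (2 * π), |u' s| ^ 2)
        = ∫ s in (0:ℝ)..(2 * π), u' s ^ 2 := by
      rw [intervalIntegral.integral_of_le h2π.le]
      congr 1; funext s; rw [sq_abs]
    have hDnn2 : 0 ≤ ∫ s in Ioc (0:ℝ) (2 * π), |u' s| * 1 :=
      integral_nonneg fun s => by positivity
    rw [abs_of_nonneg hDnn2] at habs
    rw [hval, hsq] at habs
    rw [mul_comm (Real.sqrt _)] at habs
    exact habs
  -- combine
  have hfin : |f x y| ≤ Real.sqrt (2 * π) * Real.sqrt (∫ s in (0:ℝ)..(2 * π), u' s ^ 2) :=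
    le_trans key2 key3
  have hI : 0 ≤ ∫ s in (0:ℝ)..(2 * π), u' s ^ 2 :=
    intervalIntegral.integral_nonneg h2π.le fun s _ => sq_nonneg _
  have := mul_self_le_mul_self (abs_nonneg (f x y)) hfin
  calc f x y ^ 2 = |f x y| * |f x y| := by rw [← abs_mul, abs_mul_self]; ring
    _ ≤ (Real.sqrt (2 * π) * Real.sqrt (∫ s in (0:ℝ)..(2 * π), u' s ^ 2))
        * (Real.sqrt (2 * π) * Real.sqrt (∫ s in (0:ℝ)..(2 * π), u' s ^ 2)) := this
    _ = 2 * π * ∫ s in (0:ℝ)..(2 * π), u' s ^ 2 := by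
        rw [show (Real.sqrt (2 * π) * Real.sqrt (∫ s in (0:ℝ)..(2 * π), u' s ^ 2))
            * (Real.sqrt (2 * π) * Real.sqrt (∫ s in (0:ℝ)..(2 * π), u' s ^ 2))
          = (Real.sqrt (2 * π) * Real.sqrt (2 * π))
            * (Real.sqrt (∫ s in (0:ℝ)..(2 * π), u' s ^ 2)
              * Real.sqrt (∫ s in (0:ℝ)..(2 * π), u' s ^ 2)) by ring]
        rw [Real.mul_self_sqrt h2π.le, Real.mul_self_sqrt hI]

end Sup

section Sup2
variable {f : ℝ → ℝ → ℝ}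

-- Step 2: bound on G(y) = ∫ (pdx f)² dx via FTC in y
lemma G_bound (hf : Nice f) (y : ℝ) :
    (∫ s in (0:ℝ)..(2 * π), pdx f s y ^ 2) ≤
      2 * (Real.sqrt (J (fun x y => pdx f x y ^ 2))
        * Real.sqrt (J (fun x y => pdy (pdx f) x y ^ 2))) := by
  set v := pdx f with hv
  have hvN : Nice v := hf.pdx'
  set q := fun (x y : ℝ) => v x y * v x y with hq
  have hqN : Nice q := hvN.mul hvN
  set G := fun t : ℝ => ∫ x in (0:ℝ)..(2 * π), q x t with hG
  set K := fun t : ℝ => ∫ x in (0:ℝ)..(2 * π), pdy q x t with hK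
  have hKi : Integrable K := hqN.pdy'.integrableParam
  have hGd : ∀ t : ℝ, HasDerivAt G (K t) t := fun t => hqN.hasDerivAt_param t
  obtain ⟨C, hC0, hC⟩ := hqN.boundParam
  have htop : Tendsto G atTop (𝓝 0) :=
    squeeze_zero_norm (fun t => by simpa [Real.norm_eq_abs] using hC t)
      (tendsto_bound_atTop C)
  have hIoi : ∫ t in Ioi y, K t = 0 - G y :=
    integral_Ioi_of_hasDerivAt_of_tendsto' (fun t _ => hGd t) hKi.integrableOn htop
  have step1 : G y ≤ ∫ t : ℝ, |K t| := by
    have h1 : G y = - ∫ t in Ioi y, K t := by rw [hIoi]; ring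
    have h2 : |∫ t in Ioi y, K t| ≤ ∫ t in Ioi y, |K t| := by
      have := MeasureTheory.norm_integral_le_integral_norm (μ := volume.restrict (Ioi y)) K
      simpa [Real.norm_eq_abs] using this
    have h3 : (∫ t in Ioi y, |K t|) ≤ ∫ t : ℝ, |K t| :=
      setIntegral_le_integral hKi.abs (Filter.Eventually.of_forall fun t => abs_nonneg _)
    calc G y = - ∫ t in Ioi y, K t := h1
      _ ≤ |∫ t in Ioi y, K t| := neg_le_abs _
      _ ≤ ∫ t in Ioi y, |K t| := h2
      _ ≤ ∫ t : ℝ, |K t| := h3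
  -- now bound ∫ |K|
  have hsplit : ∀ t : ℝ, K t
      = (∫ x in (0:ℝ)..(2 * π), pdy v x t * v x t)
        + ∫ x in (0:ℝ)..(2 * π), v x t * pdy v x t := by
    intro t
    simp only [hK]
    rw [intervalIntegral.integral_congr
      (g := fun x => pdy v x t * v x t + v x t * pdy v x t)
      (fun x _ => hvN.pdy_mul hvN x t)]
    exact intervalIntegral.integral_add ((hvN.pdy'.mul hvN).intInt t 0 (2 * π))
      ((hvN.mul hvN.pdy').intInt t 0 (2 * π))
  have habs : ∀ t : ℝ, |K t|
      ≤ |∫ x in (0:ℝ)..(2 * π), pdy v x t * v x t|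
        + |∫ x in (0:ℝ)..(2 * π), v x t * pdy v x t| := by
    intro t
    rw [hsplit t]
    exact abs_add_le _ _
  have hint1 : Integrable (fun t => |∫ x in (0:ℝ)..(2 * π), pdy v x t * v x t|) :=
    (hvN.pdy'.mul hvN).integrableParam.abs
  have hint2 : Integrable (fun t => |∫ x in (0:ℝ)..(2 * π), v x t * pdy v x t|) :=
    (hvN.mul hvN.pdy').integrableParam.abs
  have step2 : (∫ t : ℝ, |K t|)
      ≤ (∫ t : ℝ, |∫ x in (0:ℝ)..(2 * π), pdy v x t * v x t|)
        + ∫ t : ℝ, |∫ x in (0:ℝ)..(2 * π), v x t * pdy v x t| := by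
    rw [← integral_add hint1 hint2]
    exact integral_mono hKi.abs (hint1.add hint2) habs
  have cs1 : (∫ t : ℝ, |∫ x in (0:ℝ)..(2 * π), pdy v x t * v x t|)
      ≤ Real.sqrt (J (fun x y => pdy v x y ^ 2)) * Real.sqrt (J (fun x y => v x y ^ 2)) :=
    J_cs_abs hvN.pdy' hvN
  have cs2 : (∫ t : ℝ, |∫ x in (0:ℝ)..(2 * π), v x t * pdy v x t|)
      ≤ Real.sqrt (J (fun x y => v x y ^ 2)) * Real.sqrt (J (fun x y => pdy v x y ^ 2)) :=
    J_cs_abs hvN hvN.pdy'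
  have hGq : (∫ s in (0:ℝ)..(2 * π), pdx f s y ^ 2) = G y := by
    rw [hG]
    apply intervalIntegral.integral_congr
    intro s _
    rw [hq]; ring
  rw [hGq]
  calc G y ≤ ∫ t : ℝ, |K t| := step1
    _ ≤ _ := step2
    _ ≤ Real.sqrt (J (fun x y => pdy v x y ^ 2)) * Real.sqrt (J (fun x y => v x y ^ 2))
        + Real.sqrt (J (fun x y => v x y ^ 2)) * Real.sqrt (J (fun x y => pdy v x y ^ 2)) :=
        add_le_add cs1 cs2
    _ = 2 * (Real.sqrt (J (fun x y => v x y ^ 2))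
        * Real.sqrt (J (fun x y => pdy v x y ^ 2))) := by ring

-- combined sup bound
lemma sup_bound (hf : Nice f) (h0 : ZeroAvgX f) (x y : ℝ) :
    f x y ^ 2 ≤ 4 * π * (Real.sqrt (J (fun x y => pdx f x y ^ 2))
      * Real.sqrt (J (fun x y => pdy (pdx f) x y ^ 2))) := by
  have h1 := sq_le_pdx_int hf h0 x y
  have h2 := G_bound hf y
  have hπ : (0:ℝ) < π := Real.pi_pos
  nlinarith [h1, h2, Real.pi_pos]

-- Poincaré inequality
lemma J_poincare (hf : Nice f) (h0 : ZeroAvgX f) :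
    J (fun x y => f x y ^ 2) ≤ 4 * π ^ 2 * J (fun x y => pdx f x y ^ 2) := by
  have h2π : (0:ℝ) < 2 * π := Real.two_pi_pos
  have hinner : ∀ y : ℝ, (∫ x in (0:ℝ)..(2 * π), f x y ^ 2)
      ≤ 4 * π ^ 2 * ∫ s in (0:ℝ)..(2 * π), pdx f s y ^ 2 := by
    intro y
    have hptw : ∀ x ∈ Set.Icc (0:ℝ) (2 * π), f x y ^ 2
        ≤ 2 * π * ∫ s in (0:ℝ)..(2 * π), pdx f s y ^ 2 := fun x _ =>
      sq_le_pdx_int hf h0 x y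
    have hmono := intervalIntegral.integral_mono_on h2π.le
      (hf.sq.intInt y 0 (2 * π)) (intervalIntegrable_const) hptw
    have hconstint : (∫ _ in (0:ℝ)..(2 * π),
        (2 * π * ∫ s in (0:ℝ)..(2 * π), pdx f s y ^ 2))
        = 2 * π * (2 * π * ∫ s in (0:ℝ)..(2 * π), pdx f s y ^ 2) := by
      rw [intervalIntegral.integral_const]
      simp [smul_eq_mul]
    rw [hconstint] at hmono
    calc (∫ x in (0:ℝ)..(2 * π), f x y ^ 2)
        ≤ 2 * π * (2 * π * ∫ s in (0:ℝ)..(2 * π), pdx f s y ^ 2) := hmono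
      _ = 4 * π ^ 2 * ∫ s in (0:ℝ)..(2 * π), pdx f s y ^ 2 := by ring
  have houter := integral_mono hf.sq.integrableParam
    ((hf.pdx'.sq.integrableParam).const_mul (4 * π ^ 2)) hinner
  calc J (fun x y => f x y ^ 2) ≤ ∫ y : ℝ, 4 * π ^ 2 * ∫ s in (0:ℝ)..(2 * π), pdx f s y ^ 2 :=
        houter
    _ = 4 * π ^ 2 * J (fun x y => pdx f x y ^ 2) := integral_const_mul _ _

end Sup2

lemma Nice.lapN {f : ℝ → ℝ → ℝ} (hf : Nice f) : Nice (lap f) := hf.pdx'.pdx'.add hf.pdy'.pdy'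

section Energy
variable {w h ω ψ χ : ℝ → ℝ → ℝ}

lemma Jsq_mul (f : ℝ → ℝ → ℝ) :
    J (fun x y => f x y ^ 2) = J (fun x y => f x y * f x y) := by
  congr 1; funext x y; ring

-- quadratic absorption
lemma E_le {E K : ℝ} (hE : 0 ≤ E) (hK : 0 ≤ K) (h : E ≤ K * Real.sqrt E) : E ≤ K ^ 2 := by
  nlinarith [Real.sq_sqrt hE, Real.sqrt_nonneg E, sq_nonneg (K - Real.sqrt E)]

-- energy identity : ∫|∇w|² = -∫ w Δw
lemma J_energy (hw : Nice w) :
    J (fun x y => pdx w x y ^ 2) + J (fun x y => pdy w x y ^ 2)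
      = - J (fun x y => w x y * lap w x y) := by
  have e1 : J (fun x y => w x y * pdx (pdx w) x y)
      = - J (fun x y => pdx w x y * pdx w x y) := J_ibp_x hw hw.pdx'
  have e2 : J (fun x y => w x y * pdy (pdy w) x y)
      = - J (fun x y => pdy w x y * pdy w x y) := J_ibp_y hw hw.pdy'
  have e3 : J (fun x y => w x y * lap w x y)
      = J (fun x y => w x y * pdx (pdx w) x y) + J (fun x y => w x y * pdy (pdy w) x y) := by
    rw [← J_add (hw.mul hw.pdx'.pdx') (hw.mul hw.pdy'.pdy')]
    congr 1; funext x y; unfold lap; ring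
  rw [Jsq_mul (pdx w), Jsq_mul (pdy w), e3, e1, e2]
  ring

-- mixed term identity : ∫ w_xx w_yy = ∫ (w_xy)²
lemma J_mixed (hw : Nice w) :
    J (fun x y => pdx (pdx w) x y * pdy (pdy w) x y)
      = J (fun x y => pdy (pdx w) x y ^ 2) := by
  have s1 : J (fun x y => pdx (pdx w) x y * pdy (pdy w) x y)
      = J (fun x y => pdy (pdy w) x y * pdx (pdx w) x y) := by
    congr 1; funext x y; ring
  have e1 : J (fun x y => pdy (pdy w) x y * pdx (pdx w) x y)
      = - J (fun x y => pdx (pdy (pdy w)) x y * pdx w x y) :=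
    J_ibp_x hw.pdy'.pdy' hw.pdx'
  -- pdx (pdy (pdy w)) = pdy (pdy (pdx w))
  have comm1 : pdx (pdy (pdy w)) = pdy (pdx (pdy w)) := (hw.pdy').pdx_pdy_comm'
  have comm2 : pdx (pdy w) = pdy (pdx w) := hw.pdx_pdy_comm'
  have comm3 : pdx (pdy (pdy w)) = pdy (pdy (pdx w)) := by
    rw [comm1, comm2]
  have s2 : J (fun x y => pdx (pdy (pdy w)) x y * pdx w x y)
      = J (fun x y => pdx w x y * pdy (pdy (pdx w)) x y) := by
    rw [comm3]; congr 1; funext x y; ring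
  have e2 : J (fun x y => pdx w x y * pdy (pdy (pdx w)) x y)
      = - J (fun x y => pdy (pdx w) x y * pdy (pdx w) x y) :=
    J_ibp_y hw.pdx' hw.pdx'.pdy'
  rw [s1, e1, s2, e2, Jsq_mul (pdy (pdx w))]
  ring

-- expansion of ∫ (Δw)²
lemma J_lap_expand (hw : Nice w) :
    J (fun x y => lap w x y ^ 2)
      = J (fun x y => pdx (pdx w) x y ^ 2) + 2 * J (fun x y => pdy (pdx w) x y ^ 2)
        + J (fun x y => pdy (pdy w) x y ^ 2) := by
  have hxx : Nice (pdx (pdx w)) := hw.pdx'.pdx'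
  have hyy : Nice (pdy (pdy w)) := hw.pdy'.pdy'
  have e0 : J (fun x y => lap w x y ^ 2)
      = J (fun x y => (pdx (pdx w) x y ^ 2 + 2 * (pdx (pdx w) x y * pdy (pdy w) x y))
          + pdy (pdy w) x y ^ 2) := by
    congr 1; funext x y; unfold lap; ring
  have n1 : Nice (fun x y => pdx (pdx w) x y ^ 2) := hxx.sq
  have n2 : Nice (fun x y => 2 * (pdx (pdx w) x y * pdy (pdy w) x y)) := by
    have := (hxx.mul hyy).add (hxx.mul hyy)
    have e : (fun x y => 2 * (pdx (pdx w) x y * pdy (pdy w) x y))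
        = fun x y => pdx (pdx w) x y * pdy (pdy w) x y
            + pdx (pdx w) x y * pdy (pdy w) x y := by
      funext x y; ring
    rw [e]; exact this
  have n3 : Nice (fun x y => pdy (pdy w) x y ^ 2) := hyy.sq
  rw [e0, J_add (n1.add n2) n3, J_add n1 n2]
  have e4 : J (fun x y => 2 * (pdx (pdx w) x y * pdy (pdy w) x y))
      = 2 * J (fun x y => pdy (pdx w) x y ^ 2) := by
    have e5 : J (fun x y => 2 * (pdx (pdx w) x y * pdy (pdy w) x y))
        = J (fun x y => pdx (pdx w) x y * pdy (pdy w) x y)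
          + J (fun x y => pdx (pdx w) x y * pdy (pdy w) x y) := by
      rw [← J_add (hxx.mul hyy) (hxx.mul hyy)]
      congr 1; funext x y; ring
    rw [e5, J_mixed hw]; ring
  rw [e4]

-- gradient estimate: E ≤ 4π² ∫(Δw)²
lemma grad_est (hw : Nice w) (h0 : ZeroAvgX w) :
    J (fun x y => pdx w x y ^ 2) + J (fun x y => pdy w x y ^ 2)
      ≤ 4 * π ^ 2 * J (fun x y => lap w x y ^ 2) := by
  set Ex := J (fun x y => pdx w x y ^ 2) with hEx
  set Ey := J (fun x y => pdy w x y ^ 2) with hEy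
  set L := J (fun x y => lap w x y ^ 2) with hL
  have hExnn : 0 ≤ Ex := J_sq_nonneg _
  have hEynn : 0 ≤ Ey := J_sq_nonneg _
  have hLnn : 0 ≤ L := J_sq_nonneg _
  have hen := J_energy hw
  have hcs := J_cs hw hw.lapN
  have hpoin := J_poincare hw h0
  -- √(J w²) ≤ 2π √(Ex+Ey)
  have h1 : Real.sqrt (J (fun x y => w x y ^ 2)) ≤ 2 * π * Real.sqrt (Ex + Ey) := by
    have h2 : J (fun x y => w x y ^ 2) ≤ 4 * π ^ 2 * (Ex + Ey) := by
      have : Ex ≤ Ex + Ey := by linarith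
      nlinarith [hpoin, Real.pi_pos]
    calc Real.sqrt (J (fun x y => w x y ^ 2)) ≤ Real.sqrt (4 * π ^ 2 * (Ex + Ey)) :=
          Real.sqrt_le_sqrt h2
      _ = 2 * π * Real.sqrt (Ex + Ey) := by
          rw [show 4 * π ^ 2 * (Ex + Ey) = (2 * π) ^ 2 * (Ex + Ey) by ring,
            Real.sqrt_mul (by positivity), Real.sqrt_sq (by positivity)]
  have key : Ex + Ey ≤ 2 * π * Real.sqrt L * Real.sqrt (Ex + Ey) := by
    have h3 : Ex + Ey ≤ |J (fun x y => w x y * lap w x y)| := by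
      rw [hen] at *
      exact le_trans (le_refl _) (neg_le_abs _)
    calc Ex + Ey ≤ |J (fun x y => w x y * lap w x y)| := h3
      _ ≤ Real.sqrt (J (fun x y => w x y ^ 2)) * Real.sqrt L := hcs
      _ ≤ (2 * π * Real.sqrt (Ex + Ey)) * Real.sqrt L :=
          mul_le_mul_of_nonneg_right h1 (Real.sqrt_nonneg _)
      _ = 2 * π * Real.sqrt L * Real.sqrt (Ex + Ey) := by ring
  have := E_le (by linarith : (0:ℝ) ≤ Ex + Ey) (by positivity) key
  calc Ex + Ey ≤ (2 * π * Real.sqrt L) ^ 2 := this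
    _ = 4 * π ^ 2 * Real.sqrt L ^ 2 := by ring
    _ = 4 * π ^ 2 * L := by rw [Real.sq_sqrt hLnn]

end Energy

set_option maxHeartbeats 1000000
section Main
variable {ω ψ χ : ℝ → ℝ → ℝ}

-- numerical sup lemma
lemma sup_num {u J1 J2 W : ℝ} (hu : u ^ 2 ≤ 4 * π * (Real.sqrt J1 * Real.sqrt J2))
    (h1 : J1 ≤ 40 * W) (h2 : J2 ≤ W) (hJ1 : 0 ≤ J1) (hJ2 : 0 ≤ J2) (hW : 0 ≤ W) :
    |u| ≤ 10 * Real.sqrt W := by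
  have e1 : Real.sqrt J1 ≤ Real.sqrt 40 * Real.sqrt W := by
    rw [← Real.sqrt_mul (by norm_num : (0:ℝ) ≤ 40)]
    exact Real.sqrt_le_sqrt h1
  have e2 : Real.sqrt J2 ≤ Real.sqrt W := Real.sqrt_le_sqrt h2
  have e3 : u ^ 2 ≤ 4 * π * (Real.sqrt 40 * Real.sqrt W * Real.sqrt W) := by
    have := mul_le_mul e1 e2 (Real.sqrt_nonneg _) (by positivity)
    nlinarith [Real.pi_pos, this]
  have e4 : Real.sqrt W * Real.sqrt W = W := Real.mul_self_sqrt hW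
  have e5 : u ^ 2 ≤ 4 * π * (Real.sqrt 40 * W) := by
    have e45 : Real.sqrt 40 * Real.sqrt W * Real.sqrt W = Real.sqrt 40 * W := by
      rw [mul_assoc, e4]
    rw [e45] at e3
    exact e3
  have h40 : Real.sqrt 40 ≤ 7 := by
    rw [show (7:ℝ) = Real.sqrt 49 by rw [show (49:ℝ) = 7 ^ 2 by norm_num, Real.sqrt_sq] <;> norm_num]
    exact Real.sqrt_le_sqrt (by norm_num)
  have hπ : π < 3.15 := Real.pi_lt_d2
  have h88 : 4 * π * Real.sqrt 40 ≤ 100 := by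
    nlinarith [hπ, h40, Real.sqrt_nonneg (40:ℝ), Real.pi_pos]
  have e6 : u ^ 2 ≤ 100 * W := by
    have := mul_le_mul_of_nonneg_right h88 hW
    nlinarith [e5, this, Real.sqrt_nonneg (40:ℝ), Real.pi_pos, hW]
  have e7 : |u| = Real.sqrt (u ^ 2) := (Real.sqrt_sq_eq_abs u).symm
  rw [e7]
  calc Real.sqrt (u ^ 2) ≤ Real.sqrt (100 * W) := Real.sqrt_le_sqrt e6
    _ = 10 * Real.sqrt W := by
        rw [Real.sqrt_mul (by norm_num : (0:ℝ) ≤ 100),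
          show (100:ℝ) = 10 ^ 2 by norm_num, Real.sqrt_sq (by norm_num : (0:ℝ) ≤ 10)]

theorem main_est (hωN : Nice ω) (h0ω : ZeroAvgX ω)
    (hψN : Nice ψ) (h0ψ : ZeroAvgX ψ) (hχN : Nice χ) (h0χ : ZeroAvgX χ)
    (hψ : ∀ x y, lap ψ x y = ω x y)
    (hχ : ∀ x y, lap (lap χ) x y = pdy ω x y) (x y : ℝ) :
    Real.sqrt ((pdy χ x y) ^ 2 + (pdx χ x y) ^ 2) + |ψ x y| ≤
      30 * Real.sqrt (J (fun x y => ω x y ^ 2)) := by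
  set W := J (fun x y => ω x y ^ 2) with hW
  have hWnn : 0 ≤ W := J_sq_nonneg ω
  -- ψ estimates
  have hlapψsq : J (fun x y => lap ψ x y ^ 2) = W := by
    rw [hW]; congr 1; funext a b; rw [hψ a b]
  have gradψ : J (fun x y => pdx ψ x y ^ 2) + J (fun x y => pdy ψ x y ^ 2)
      ≤ 4 * π ^ 2 * W := by
    have := grad_est hψN h0ψ
    rwa [hlapψsq] at this
  have Aψ : J (fun x y => pdx ψ x y ^ 2) ≤ 40 * W := by
    have h1 : J (fun x y => pdy ψ x y ^ 2) ≥ 0 := J_sq_nonneg _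
    have hp : 4 * π ^ 2 ≤ 40 := by nlinarith [Real.pi_lt_d2, Real.pi_pos]
    have := mul_le_mul_of_nonneg_right hp hWnn
    linarith
  have Bψ : J (fun x y => pdy (pdx ψ) x y ^ 2) ≤ W := by
    have hexp := J_lap_expand hψN
    rw [hlapψsq] at hexp
    have h1 : 0 ≤ J (fun x y => pdx (pdx ψ) x y ^ 2) := J_sq_nonneg _
    have h2 : 0 ≤ J (fun x y => pdy (pdy ψ) x y ^ 2) := J_sq_nonneg _
    have h3 : 0 ≤ J (fun x y => pdy (pdx ψ) x y ^ 2) := J_sq_nonneg _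
    linarith
  have supψ : |ψ x y| ≤ 10 * Real.sqrt W :=
    sup_num (sup_bound hψN h0ψ x y) Aψ Bψ (J_sq_nonneg _) (J_sq_nonneg _) hWnn
  -- χ estimates
  have hvN : Nice (lap χ) := hχN.lapN
  set Jv := J (fun x y => lap χ x y ^ 2) with hJv
  have hJvnn : 0 ≤ Jv := J_sq_nonneg _
  have gradχ : J (fun x y => pdx χ x y ^ 2) + J (fun x y => pdy χ x y ^ 2)
      ≤ 4 * π ^ 2 * Jv := grad_est hχN h0χ
  -- Jv ≤ 4π² W
  have hJvW : Jv ≤ 4 * π ^ 2 * W := by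
    -- J(v²) = -J(pdy χ · ω)
    have eA : J (fun x y => lap χ x y * pdx (pdx χ) x y)
        = J (fun x y => pdx (pdx (lap χ)) x y * χ x y) := by
      have i1 := J_ibp_x hvN hχN.pdx'
      have i2 := J_ibp_x hvN.pdx' hχN
      rw [i1, i2]; ring
    have eB : J (fun x y => lap χ x y * pdy (pdy χ) x y)
        = J (fun x y => pdy (pdy (lap χ)) x y * χ x y) := by
      have i1 := J_ibp_y hvN hχN.pdy'
      have i2 := J_ibp_y hvN.pdy' hχN
      rw [i1, i2]; ring
    have e0 : Jv = J (fun x y => lap χ x y * pdx (pdx χ) x y)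
        + J (fun x y => lap χ x y * pdy (pdy χ) x y) := by
      rw [hJv, ← J_add (hvN.mul hχN.pdx'.pdx') (hvN.mul hχN.pdy'.pdy')]
      congr 1; funext a b
      show lap χ a b ^ 2 = _
      unfold lap; ring
    have e1 : Jv = J (fun x y => lap (lap χ) x y * χ x y) := by
      rw [e0, eA, eB, ← J_add (hvN.pdx'.pdx'.mul hχN) (hvN.pdy'.pdy'.mul hχN)]
      congr 1; funext a b
      show _ = lap (lap χ) a b * χ a b
      unfold lap; ring
    have e2 : J (fun x y => lap (lap χ) x y * χ x y)
        = J (fun x y => χ x y * pdy ω x y) := by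
      congr 1; funext a b; rw [hχ a b]; ring
    have e3 : J (fun x y => χ x y * pdy ω x y)
        = - J (fun x y => pdy χ x y * ω x y) := J_ibp_y hχN hωN
    have hcs := J_cs hχN.pdy' hωN
    have e4 : Real.sqrt (J (fun x y => pdy χ x y ^ 2)) ≤ 2 * π * Real.sqrt Jv := by
      have h5 : J (fun x y => pdy χ x y ^ 2) ≤ 4 * π ^ 2 * Jv := by
        have := J_sq_nonneg (fun x y => pdx χ x y)
        nlinarith [gradχ]
      calc Real.sqrt (J (fun x y => pdy χ x y ^ 2)) ≤ Real.sqrt (4 * π ^ 2 * Jv) :=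
            Real.sqrt_le_sqrt h5
        _ = 2 * π * Real.sqrt Jv := by
            rw [show 4 * π ^ 2 * Jv = (2 * π) ^ 2 * Jv by ring,
              Real.sqrt_mul (by positivity), Real.sqrt_sq (by positivity)]
    have key : Jv ≤ 2 * π * Real.sqrt W * Real.sqrt Jv := by
      calc Jv = - J (fun x y => pdy χ x y * ω x y) := by rw [e1, e2, e3]
        _ ≤ |J (fun x y => pdy χ x y * ω x y)| := neg_le_abs _
        _ ≤ Real.sqrt (J (fun x y => pdy χ x y ^ 2)) * Real.sqrt W := by
            rw [hW]; exact hcs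
        _ ≤ (2 * π * Real.sqrt Jv) * Real.sqrt W :=
            mul_le_mul_of_nonneg_right e4 (Real.sqrt_nonneg _)
        _ = 2 * π * Real.sqrt W * Real.sqrt Jv := by ring
    have := E_le hJvnn (by positivity) key
    calc Jv ≤ (2 * π * Real.sqrt W) ^ 2 := this
      _ = 4 * π ^ 2 * Real.sqrt W ^ 2 := by ring
      _ = 4 * π ^ 2 * W := by rw [Real.sq_sqrt hWnn]
  -- T := ∫|∇v|² ≤ W
  have hT : J (fun x y => pdx (lap χ) x y ^ 2) + J (fun x y => pdy (lap χ) x y ^ 2) ≤ W := by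
    have en := J_energy hvN
    have e1 : J (fun x y => lap χ x y * lap (lap χ) x y)
        = J (fun x y => lap χ x y * pdy ω x y) := by
      congr 1; funext a b; rw [hχ a b]
    have e2 : J (fun x y => lap χ x y * pdy ω x y)
        = - J (fun x y => pdy (lap χ) x y * ω x y) := J_ibp_y hvN hωN
    have hcs := J_cs hvN.pdy' hωN
    set T := J (fun x y => pdx (lap χ) x y ^ 2) + J (fun x y => pdy (lap χ) x y ^ 2) with hTd
    have hTnn : 0 ≤ T := by
      have := J_sq_nonneg (fun x y => pdx (lap χ) x y)
      have := J_sq_nonneg (fun x y => pdy (lap χ) x y)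
      rw [hTd]; linarith
    have e5 : Real.sqrt (J (fun x y => pdy (lap χ) x y ^ 2)) ≤ Real.sqrt T := by
      apply Real.sqrt_le_sqrt
      have := J_sq_nonneg (fun x y => pdx (lap χ) x y)
      rw [hTd]; linarith
    have key : T ≤ Real.sqrt W * Real.sqrt T := by
      calc T = - J (fun x y => lap χ x y * lap (lap χ) x y) := en
        _ = J (fun x y => pdy (lap χ) x y * ω x y) := by rw [e1, e2]; ring
        _ ≤ |J (fun x y => pdy (lap χ) x y * ω x y)| := le_abs_self _
        _ ≤ Real.sqrt (J (fun x y => pdy (lap χ) x y ^ 2)) * Real.sqrt W := by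
            rw [hW]; exact hcs
        _ ≤ Real.sqrt T * Real.sqrt W :=
            mul_le_mul_of_nonneg_right e5 (Real.sqrt_nonneg _)
        _ = Real.sqrt W * Real.sqrt T := by ring
    have := E_le hTnn (Real.sqrt_nonneg W) key
    calc T ≤ Real.sqrt W ^ 2 := this
      _ = W := Real.sq_sqrt hWnn
  -- lap (pdy χ) = pdy (lap χ)
  have hcomm2 : pdy (pdx (pdx χ)) = pdx (pdx (pdy χ)) := by
    have c2 : pdx (pdy χ) = pdy (pdx χ) := hχN.pdx_pdy_comm'
    have c1 : pdx (pdy (pdx χ)) = pdy (pdx (pdx χ)) := hχN.pdx'.pdx_pdy_comm'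
    rw [← c1, ← c2]
  have hlapw2 : (fun a b => lap (pdy χ) a b ^ 2) = fun a b => pdy (lap χ) a b ^ 2 := by
    funext a b
    have e : pdy (lap χ) a b = pdy (pdx (pdx χ)) a b + pdy (pdy (pdy χ)) a b := by
      have := hχN.pdx'.pdx'.pdy_add hχN.pdy'.pdy' a b
      have elap : lap χ = fun x y => pdx (pdx χ) x y + pdy (pdy χ) x y := rfl
      rw [elap]
      exact this
    have e2 : lap (pdy χ) a b = pdy (pdx (pdx χ)) a b + pdy (pdy (pdy χ)) a b := by
      unfold lap
      rw [hcomm2]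
    rw [e, e2]
  have hJlapw2 : J (fun a b => lap (pdy χ) a b ^ 2) ≤ W := by
    rw [hlapw2]
    have := J_sq_nonneg (fun x y => pdx (lap χ) x y)
    linarith [hT]
  -- second derivative bounds from lap expansions
  have expχ := J_lap_expand hχN
  have expw2 := J_lap_expand hχN.pdy'
  rw [hlapw2] at expw2  -- oh careful: expw2 LHS is J(lap (pdy χ)²)
  -- bounds
  have Jxxχ : J (fun x y => pdx (pdx χ) x y ^ 2) ≤ 40 * W := by
    have h1 := J_sq_nonneg (fun x y => pdy (pdx χ) x y)
    have h2 := J_sq_nonneg (fun x y => pdy (pdy χ) x y)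
    have hle : J (fun x y => pdx (pdx χ) x y ^ 2) ≤ Jv := by rw [hJv]; linarith [expχ]
    have hp : 4 * π ^ 2 ≤ 40 := by nlinarith [Real.pi_lt_d2, Real.pi_pos]
    have := mul_le_mul_of_nonneg_right hp hWnn
    linarith [hJvW]
  have Jxyχ : J (fun x y => pdy (pdx χ) x y ^ 2) ≤ 40 * W := by
    have h1 := J_sq_nonneg (fun x y => pdx (pdx χ) x y)
    have h2 := J_sq_nonneg (fun x y => pdy (pdy χ) x y)
    have hle : 2 * J (fun x y => pdy (pdx χ) x y ^ 2) ≤ Jv := by rw [hJv]; linarith [expχ]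
    have hp : 4 * π ^ 2 ≤ 40 := by nlinarith [Real.pi_lt_d2, Real.pi_pos]
    have := mul_le_mul_of_nonneg_right hp hWnn
    linarith [hJvW]
  have Jxxw2 : J (fun x y => pdx (pdx (pdy χ)) x y ^ 2) ≤ W := by
    have h1 := J_sq_nonneg (fun x y => pdy (pdx (pdy χ)) x y)
    have h2 := J_sq_nonneg (fun x y => pdy (pdy (pdy χ)) x y)
    have hTT : J (fun a b => pdy (lap χ) a b ^ 2) ≤ W := by
      have := J_sq_nonneg (fun x y => pdx (lap χ) x y)
      linarith [hT]
    linarith [expw2, hTT]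
  have Jxyw2 : J (fun x y => pdy (pdx (pdy χ)) x y ^ 2) ≤ W := by
    have h1 := J_sq_nonneg (fun x y => pdx (pdx (pdy χ)) x y)
    have h2 := J_sq_nonneg (fun x y => pdy (pdy (pdy χ)) x y)
    have h3 := J_sq_nonneg (fun x y => pdy (pdx (pdy χ)) x y)
    have hTT : J (fun a b => pdy (lap χ) a b ^ 2) ≤ W := by
      have := J_sq_nonneg (fun x y => pdx (lap χ) x y)
      linarith [hT]
    linarith [expw2, hTT]
  -- sup bound for pdx χ
  have supx : |pdx χ x y| ≤ 10 * Real.sqrt W := by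
    have hsb := sup_bound hχN.pdx' hχN.zeroAvg_pdx x y
    have heq : (fun a b => pdy (pdx (pdx χ)) a b ^ 2)
        = fun a b => pdx (pdx (pdy χ)) a b ^ 2 := by rw [hcomm2]
    rw [heq] at hsb
    exact sup_num hsb Jxxχ Jxxw2 (J_sq_nonneg _) (J_sq_nonneg _) hWnn
  -- sup bound for pdy χ
  have supy : |pdy χ x y| ≤ 10 * Real.sqrt W := by
    have hsb := sup_bound hχN.pdy' (hχN.zeroAvg_pdy h0χ) x y
    have heq : (fun a b => pdx (pdy χ) a b ^ 2)
        = fun a b => pdy (pdx χ) a b ^ 2 := by rw [hχN.pdx_pdy_comm']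
    rw [heq] at hsb
    exact sup_num hsb Jxyχ Jxyw2 (J_sq_nonneg _) (J_sq_nonneg _) hWnn
  -- combine
  have hsqrt : Real.sqrt ((pdy χ x y) ^ 2 + (pdx χ x y) ^ 2)
      ≤ |pdy χ x y| + |pdx χ x y| := by
    have h1 : (pdy χ x y) ^ 2 + (pdx χ x y) ^ 2 ≤ (|pdy χ x y| + |pdx χ x y|) ^ 2 := by
      nlinarith [abs_nonneg (pdy χ x y), abs_nonneg (pdx χ x y), sq_abs (pdy χ x y),
        sq_abs (pdx χ x y), abs_mul_abs_self (pdy χ x y), abs_mul_abs_self (pdx χ x y)]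
    calc Real.sqrt ((pdy χ x y) ^ 2 + (pdx χ x y) ^ 2)
        ≤ Real.sqrt ((|pdy χ x y| + |pdx χ x y|) ^ 2) := Real.sqrt_le_sqrt h1
      _ = |pdy χ x y| + |pdx χ x y| := Real.sqrt_sq (by positivity)
  calc Real.sqrt ((pdy χ x y) ^ 2 + (pdx χ x y) ^ 2) + |ψ x y|
      ≤ (|pdy χ x y| + |pdx χ x y|) + |ψ x y| := by linarith [hsqrt]
    _ ≤ (10 * Real.sqrt W + 10 * Real.sqrt W) + 10 * Real.sqrt W := by
        linarith [supx, supy, supψ]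
    _ = 30 * Real.sqrt W := by ring
end Main


/-- `‖∇⊥∂_yΔ⁻²ω‖_{L^∞} + ‖Δ⁻¹ω‖_{L^∞} ≤ C‖ω‖_{L²}` for an absolute constant `C`;
here `ψ = Δ⁻¹ω` and `χ = Δ⁻²∂_yω`. -/
theorem stmt18 :
    ∃ C : ℝ, 0 < C ∧ ∀ ω ψ χ : ℝ → ℝ → ℝ,
      ContDiff ℝ (⊤ : ℕ∞) (Function.uncurry ω) → PerX ω → RapidDecay ω → ZeroAvgX ω →
      ContDiff ℝ (⊤ : ℕ∞) (Function.uncurry ψ) → PerX ψ → RapidDecay ψ → ZeroAvgX ψ →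
      ContDiff ℝ (⊤ : ℕ∞) (Function.uncurry χ) → PerX χ → RapidDecay χ → ZeroAvgX χ →
      (∀ x y, lap ψ x y = ω x y) →
      (∀ x y, lap (lap χ) x y = pdy ω x y) →
      ∀ x y : ℝ,
        Real.sqrt ((pdy χ x y) ^ 2 + (pdx χ x y) ^ 2) + |ψ x y| ≤
          C * Real.sqrt (∫ y' : ℝ, ∫ x' in (0:ℝ)..(2 * π), (ω x' y') ^ 2) := by
  refine ⟨30, by norm_num, ?_⟩
  intro ω ψ χ hω1 hω2 hω3 hω4 hψ1 hψ2 hψ3 hψ4 hχ1 hχ2 hχ3 hχ4 hlψ hlχ x y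
  have h := main_est ⟨hω1, hω2, hω3⟩ hω4 ⟨hψ1, hψ2, hψ3⟩ hψ4 ⟨hχ1, hχ2, hχ3⟩ hχ4 hlψ hlχ x y
  unfold J at h
  exact h
end
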